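/- arXiv:0710.1386 — 4 statements merged into one kernel-verified Lean document; each statement's English description precedes it below -/
import Mathlib

section
/- Under the setting of the main theorem (H symmetric, conditions (C1) and (C2) for q, Q = (t^s), I = Q : 𝔪^q), if additionally s ≥ c(H), then I² = QI. -/
set_option maxHeartbeats 1000000
set_option synthInstance.maxHeartbeats 1000000

open PowerSeries

/-- The numerical semigroup ring `k[[H]]`: power series supported on `H`. -/
noncomputable def ssr (k : Type) [Field k] (H : AddSubmonoid ℕ) :
    Subalgebra k (PowerSeries k) where
  carrier := {f | ∀ n : ℕ, n ∉ H → PowerSeries.coeff n f = 0}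
  mul_mem' := by
    intro f g hf hg n hn
    rw [Set.mem_setOf_eq] at hf hg
    rw [PowerSeries.coeff_mul]
    apply Finset.sum_eq_zero
    rintro ⟨i, j⟩ hij
    replace hij : i + j = n := by simpa using hij
    by_cases hi : i ∈ H
    · have hj : j ∉ H := fun hj => hn (hij ▸ H.add_mem hi hj)
      rw [hg j hj, mul_zero]
    · rw [hf i hi, zero_mul]
  add_mem' := by
    intro f g hf hg n hn
    rw [Set.mem_setOf_eq] at hf hg
    rw [map_add, hf n hn, hg n hn, add_zero]
  one_mem' := by
    intro n hn
    have h0 : n ≠ 0 := fun h => hn (by rw [h]; exact H.zero_mem)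
    simp [PowerSeries.coeff_one, h0]
  zero_mem' := by
    intro n _
    simp
  algebraMap_mem' := by
    intro r n hn
    have h0 : n ≠ 0 := fun h => hn (by rw [h]; exact H.zero_mem)
    simp [PowerSeries.algebraMap_apply, PowerSeries.coeff_C, h0]

/-- The monomial `t^n` as an element of `k[[H]]`, for `n ∈ H`. -/
noncomputable def tp (k : Type) [Field k] (H : AddSubmonoid ℕ) (n : ℕ) (hn : n ∈ H) :
    ssr k H :=
  ⟨PowerSeries.X ^ n, by
    show ∀ m : ℕ, m ∉ H → PowerSeries.coeff m (PowerSeries.X ^ n : PowerSeries k) = 0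
    intro m hm
    rw [PowerSeries.coeff_X_pow]
    exact if_neg (fun h => hm (by rw [h]; exact hn))⟩

/-- The maximal ideal of `k[[H]]`, generated by the monomials `t^n`, `0 < n ∈ H`. -/
noncomputable def mIdeal (k : Type) [Field k] (H : AddSubmonoid ℕ) : Ideal (ssr k H) :=
  Ideal.span {x | ∃ n : ℕ, ∃ hn : n ∈ H, 0 < n ∧ x = tp k H n hn}

namespace Stmt10Aux

/-- exponent sets of q-fold products of positive semigroup monomials -/
def MM (H : AddSubmonoid ℕ) : ℕ → Set ℕ
  | 0 => {0}
  | q + 1 => {n | ∃ x, x ∈ H ∧ 0 < x ∧ ∃ m ∈ MM H q, n = x + m}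

lemma mm_mem_H {H : AddSubmonoid ℕ} : ∀ q n, n ∈ MM H q → n ∈ H := by
  intro q
  induction q with
  | zero => intro n h; have : n = 0 := h; exact this ▸ H.zero_mem
  | succ q ih =>
    rintro n ⟨x, hx, h0, m, hm, rfl⟩
    exact H.add_mem hx (ih m hm)

lemma mm_addH {H : AddSubmonoid ℕ} {q n h : ℕ} (hn : n ∈ MM H (q+1)) (hh : h ∈ H) :
    n + h ∈ MM H (q+1) := by
  obtain ⟨x, hx, hx0, m, hm, rfl⟩ := hn
  exact ⟨x + h, H.add_mem hx hh, by omega, m, hm, by omega⟩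

lemma mm_add {H : AddSubmonoid ℕ} : ∀ {i : ℕ} (j : ℕ) {m n : ℕ},
    m ∈ MM H i → n ∈ MM H j → m + n ∈ MM H (i + j) := by
  intro i
  induction i with
  | zero =>
    intro j m n hm hn
    have : m = 0 := hm
    subst this
    simpa using hn
  | succ i ih =>
    rintro j m n ⟨x, hx, h0, m', hm', rfl⟩ hn
    have he : i + 1 + j = (i + j) + 1 := by omega
    rw [he]
    exact ⟨x, hx, h0, m' + n, ih j hm' hn, by omega⟩

lemma mm_lb {H : AddSubmonoid ℕ} {a : ℕ} (hamin : ∀ n ∈ H, n ≠ 0 → a ≤ n) :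
    ∀ q n, n ∈ MM H q → q * a ≤ n := by
  intro q
  induction q with
  | zero => intro n h; simp
  | succ q ih =>
    rintro n ⟨x, hx, h0, m, hm, rfl⟩
    have h1 := ih m hm
    have h2 := hamin x hx (by omega)
    have h3 : (q+1)*a = q*a + a := by ring
    omega

variable {k : Type} [Field k] {H : AddSubmonoid ℕ}

lemma mem_ssr_iff {f : PowerSeries k} :
    f ∈ ssr k H ↔ ∀ n, n ∉ H → PowerSeries.coeff n f = 0 := Iff.rfl

/-- support of `f` contained in `S` -/
def SuppIn (f : ssr k H) (S : Set ℕ) : Prop :=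
  ∀ n, n ∉ S → PowerSeries.coeff n (f : PowerSeries k) = 0

lemma suppIn_mono {f : ssr k H} {S T : Set ℕ} (hST : S ⊆ T) (hf : SuppIn f S) :
    SuppIn f T := fun n hn => hf n (fun h => hn (hST h))

lemma suppIn_H (f : ssr k H) : SuppIn f ↑H := f.2

lemma suppIn_zero (S : Set ℕ) : SuppIn (0 : ssr k H) S := by
  intro n _; simp

lemma suppIn_add {f g : ssr k H} {S : Set ℕ} (hf : SuppIn f S) (hg : SuppIn g S) :
    SuppIn (f + g) S := by
  intro n hn
  have : ((f + g : ssr k H) : PowerSeries k) = (f : PowerSeries k) + g := rfl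
  rw [this, map_add, hf n hn, hg n hn, add_zero]

lemma suppIn_mul {f g : ssr k H} {S T : Set ℕ} (hf : SuppIn f S) (hg : SuppIn g T) :
    SuppIn (f * g) {n | ∃ i ∈ S, ∃ j ∈ T, n = i + j} := by
  intro n hn
  have hcoe : ((f * g : ssr k H) : PowerSeries k) = (f : PowerSeries k) * g := rfl
  rw [hcoe, PowerSeries.coeff_mul]
  apply Finset.sum_eq_zero
  rintro ⟨i, j⟩ hij
  replace hij : i + j = n := by simpa using hij
  by_cases hi : i ∈ S
  · have hj : j ∉ T := fun hj => hn ⟨i, hi, j, hj, hij.symm⟩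
    rw [hg j hj, mul_zero]
  · rw [hf i hi, zero_mul]

lemma suppIn_tp (n : ℕ) (hn : n ∈ H) : SuppIn (tp k H n hn) {n} := by
  intro m hm
  have : ((tp k H n hn : ssr k H) : PowerSeries k) = (PowerSeries.X : PowerSeries k) ^ n := rfl
  rw [this, PowerSeries.coeff_X_pow]
  exact if_neg (fun h => hm h)

lemma tp_mul (m n : ℕ) (hm : m ∈ H) (hn : n ∈ H) (hmn : m + n ∈ H) :
    tp k H (m + n) hmn = tp k H m hm * tp k H n hn :=
  Subtype.ext (pow_add PowerSeries.X m n)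

lemma tp_mem_pow : ∀ (q n : ℕ) (hnH : n ∈ H), n ∈ MM H q → tp k H n hnH ∈ mIdeal k H ^ q := by
  intro q
  induction q with
  | zero =>
    intro n hnH hn
    have : n = 0 := hn
    subst this
    have h1 : tp k H 0 hnH = 1 := Subtype.ext (pow_zero _)
    rw [h1, pow_zero, Ideal.one_eq_top]
    exact Submodule.mem_top
  | succ q ih =>
    rintro n hnH ⟨x, hx, h0, m, hm, rfl⟩
    have hmH : m ∈ H := mm_mem_H q m hm
    rw [tp_mul x m hx hmH hnH, pow_succ']
    exact Ideal.mul_mem_mul (Ideal.subset_span ⟨x, hx, h0, rfl⟩) (ih m hmH hm)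


lemma m_suppIn {f : ssr k H} (hf : f ∈ mIdeal k H) : SuppIn f (MM H 1) := by
  induction hf using Submodule.span_induction with
  | mem x hx =>
    obtain ⟨n, hn, h0, rfl⟩ := hx
    refine suppIn_mono ?_ (suppIn_tp n hn)
    intro m hm
    have hmn : m = n := hm
    exact ⟨n, hn, h0, 0, rfl, by omega⟩
  | zero => exact suppIn_zero _
  | add x y hx hy ihx ihy => exact suppIn_add ihx ihy
  | smul r x hx ihx =>
    have : r • x = r * x := rfl
    rw [this]
    refine suppIn_mono ?_ (suppIn_mul (suppIn_H r) ihx)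
    rintro m ⟨i, hi, j, hj, rfl⟩
    have := mm_addH hj hi
    simpa [Nat.add_comm] using this

lemma pow_suppIn : ∀ (q : ℕ) (f : ssr k H), f ∈ mIdeal k H ^ (q+1) → SuppIn f (MM H (q+1)) := by
  intro q
  induction q with
  | zero =>
    intro f hf
    rw [pow_one] at hf
    exact m_suppIn hf
  | succ q ih =>
    intro f hf
    rw [pow_succ] at hf
    refine Submodule.mul_induction_on hf (fun f1 h1 f2 h2 => ?_)
      (fun x y ihx ihy => suppIn_add ihx ihy)
    refine suppIn_mono ?_ (suppIn_mul (ih f1 h1) (m_suppIn h2))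
    rintro m ⟨i, hi, j, hj, rfl⟩
    exact mm_add 1 hi hj

/-- factorization: if the support of `f` lies in `s + W` with `W ⊆ H`, then `f = t^s * h`
with `h` supported in `W`. -/
lemma factor (s : ℕ) (hs : s ∈ H) (W : Set ℕ) (hW : ∀ w ∈ W, w ∈ H) (f : ssr k H)
    (hf : SuppIn f {n | ∃ w ∈ W, n = s + w}) :
    ∃ h : ssr k H, SuppIn h W ∧ f = tp k H s hs * h := by
  set g : PowerSeries k := PowerSeries.mk (fun n => PowerSeries.coeff (s+n) (f : PowerSeries k))
    with hg
  have hgH : g ∈ ssr k H := by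
    intro n hn
    rw [hg, PowerSeries.coeff_mk]
    apply hf
    rintro ⟨w, hw, he⟩
    have : n = w := by omega
    exact hn (this ▸ hW w hw)
  have hval : (f : PowerSeries k) = (PowerSeries.X : PowerSeries k) ^ s * g := by
    ext N
    rw [PowerSeries.coeff_X_pow_mul']
    by_cases h : s ≤ N
    · rw [if_pos h, hg, PowerSeries.coeff_mk]
      have he2 : s + (N - s) = N := by omega
      rw [he2]
    · rw [if_neg h]
      apply hf
      rintro ⟨w, hw, he⟩
      exact h (by omega)
  refine ⟨⟨g, hgH⟩, ?_, ?_⟩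
  · intro n hn
    show PowerSeries.coeff n g = 0
    rw [hg, PowerSeries.coeff_mk]
    apply hf
    rintro ⟨w, hw, he⟩
    have : n = w := by omega
    exact hn (this ▸ hw)
  · exact Subtype.ext hval

lemma mem_span_of_supp (s : ℕ) (hs : s ∈ H) (f : ssr k H)
    (hf : SuppIn f {n | ∃ h ∈ H, n = s + h}) : f ∈ Ideal.span {tp k H s hs} := by
  obtain ⟨h, _, rfl⟩ := factor s hs ↑H (fun w hw => hw) f hf
  exact Ideal.mem_span_singleton'.2 ⟨h, mul_comm _ _⟩

lemma supp_of_mem_span (s : ℕ) (hs : s ∈ H) (f : ssr k H)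
    (hf : f ∈ Ideal.span {tp k H s hs}) : SuppIn f {n | ∃ h ∈ H, n = s + h} := by
  obtain ⟨r, rfl⟩ := Ideal.mem_span_singleton'.1 hf
  refine suppIn_mono ?_ (suppIn_mul (suppIn_H r) (suppIn_tp s hs))
  rintro m ⟨i, hi, j, hj, rfl⟩
  have : j = s := hj
  exact ⟨i, hi, by omega⟩


lemma tp_coeff_self (n : ℕ) (hn : n ∈ H) :
    PowerSeries.coeff n ((tp k H n hn : ssr k H) : PowerSeries k) = 1 := by
  show PowerSeries.coeff n (PowerSeries.X ^ n) = 1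
  rw [PowerSeries.coeff_X_pow, if_pos rfl]

end Stmt10Aux

/-- Theorem 2.1 (2): under (C1) and (C2), if `s ≥ c` then `I² = QI`. -/
theorem stmt10 (k : Type) [Field k] (H : AddSubmonoid ℕ) (hfin : (Set.univ \ (H : Set ℕ)).Finite)
    (a : ℕ) (haH : a ∈ H) (ha0 : a ≠ 0) (hamin : ∀ n ∈ H, n ≠ 0 → a ≤ n)
    (c : ℕ) (hc : ∀ n : ℕ, c ≤ n → n ∈ H) (hcmin : ∀ m : ℕ, (∀ n : ℕ, m ≤ n → n ∈ H) → c ≤ m)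
    (hsym : ∀ n : ℕ, n ≤ c - 1 → (n ∈ H ↔ (c - 1 - n) ∉ H))
    (q : ℕ) (hq : 0 < q)
    (hC1 : ∀ n : ℕ, ∀ hn : c ≤ n, tp k H n (hc n hn) ∈ mIdeal k H ^ q)
    (hC2 : ∀ (n : ℕ) (hn : n ∈ H), tp k H n hn ∉ mIdeal k H ^ (q - 1) → n < a * (q - 1))
    (s : ℕ) (hs : s ∈ H) (hs0 : 0 < s)
    (Q : Ideal (ssr k H)) (hQ : Q = Ideal.span {tp k H s hs})
    (I : Ideal (ssr k H)) (hI : I = Submodule.colon Q ((mIdeal k H ^ q : Ideal (ssr k H)) : Set (ssr k H)))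
    (hsc : c ≤ s) :
    I ^ 2 = Q * I := by
  classical
  obtain ⟨r, rfl⟩ : ∃ r, q = r + 1 := ⟨q - 1, by omega⟩
  simp only [Nat.add_sub_cancel] at hC2
  -- set version of (C1)
  have C1' : ∀ n, c ≤ n → n ∈ Stmt10Aux.MM H (r+1) := by
    intro n hn
    by_contra hmm
    have h2 := Stmt10Aux.pow_suppIn r _ (hC1 n hn) n hmm
    rw [Stmt10Aux.tp_coeff_self] at h2
    exact one_ne_zero h2
  have hc1 : 1 ≤ c := by
    by_contra hc0
    have h0 : (0:ℕ) ∈ Stmt10Aux.MM H (r+1) := C1' 0 (by omega)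
    obtain ⟨x, hx, h0x, m, hm, he⟩ := h0
    omega
  have hFH : c - 1 ∉ H := by
    intro hmem
    have := hcmin (c-1) (fun n hn => by
      rcases Nat.eq_or_lt_of_le hn with he | hlt
      · exact he ▸ hmem
      · exact hc n (by omega))
    omega
  have hsym' : ∀ u v : ℕ, u + v = c - 1 → (u ∈ H ↔ v ∉ H) := by
    intro u v huv
    have h := hsym u (by omega)
    have he : c - 1 - u = v := by omega
    rwa [he] at h
  -- set version of (C2)
  have C2' : ∀ n, n ∈ H → 0 < r → a * r ≤ n → n ∈ Stmt10Aux.MM H r := by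
    intro n hn hr hle
    obtain ⟨r', rfl⟩ : ∃ r', r = r' + 1 := ⟨r - 1, by omega⟩
    by_contra hmm
    rcases em (tp k H n hn ∈ mIdeal k H ^ (r'+1)) with hin | hout
    · have h2 := Stmt10Aux.pow_suppIn r' _ hin n hmm
      rw [Stmt10Aux.tp_coeff_self] at h2
      exact one_ne_zero h2
    · have := hC2 n hn hout
      omega
  set Ks : Set ℕ := {x | ∀ m ∈ Stmt10Aux.MM H (r+1), x + m ∈ H} with hKs
  have dagger : ∀ x ∈ Ks, ∀ y ∈ Ks, ∀ m ∈ Stmt10Aux.MM H (r+1), x + y + m ≠ c - 1 := by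
    intro x hx y hy m hm heq
    obtain ⟨w, hwH, hw0, m', hm', rfl⟩ := hm
    by_cases hyw : y + w ∈ H
    · have h1 : y + w + m' ∈ Stmt10Aux.MM H (r+1) := ⟨y + w, hyw, by omega, m', hm', rfl⟩
      have h2 := hx _ h1
      have h3 : x + (y + w + m') = c - 1 := by omega
      rw [h3] at h2
      exact hFH h2
    · have hle : (y + w) + (x + m') = c - 1 := by omega
      have hxm' : x + m' ∈ H := by
        have h := hsym' (y + w) (x + m') hle
        tauto
      rcases Nat.eq_zero_or_pos r with hr0 | hr0
      · subst hr0
        have hw1 : w ∈ Stmt10Aux.MM H 1 := ⟨w, hwH, hw0, 0, rfl, by omega⟩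
        exact hyw (hy w hw1)
      · have hlb : r * a ≤ m' := Stmt10Aux.mm_lb hamin r m' hm'
        have h3 : x + m' ∈ Stmt10Aux.MM H r := by
          refine C2' _ hxm' hr0 ?_
          have : a * r = r * a := by ring
          omega
        have h4 : w + (x + m') ∈ Stmt10Aux.MM H (r+1) := ⟨w, hwH, hw0, _, h3, rfl⟩
        have h5 := hy _ h4
        have h6 : y + (w + (x + m')) = c - 1 := by omega
        rw [h6] at h5
        exact hFH h5
  have kadd : ∀ x ∈ Ks, ∀ y ∈ Ks, x + y ∈ Ks := by
    intro x hx y hy m hm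
    by_contra hno
    have hlt : x + y + m < c := by
      by_contra hge
      exact hno (hc _ (by omega))
    have hz : (x + y + m) + (c - 1 - (x + y + m)) = c - 1 := by omega
    have hzH : c - 1 - (x + y + m) ∈ H := by
      have h := hsym' (x + y + m) _ hz
      tauto
    have hmz := Stmt10Aux.mm_addH hm hzH
    exact dagger x hx y hy _ hmz (by omega)
  set E : Set ℕ := {n | ∃ x ∈ Ks, n = s + x} with hE
  have hEH : ∀ n ∈ E, n ∈ H := by
    rintro n ⟨x, hx, rfl⟩
    exact hc _ (by omega)
  have e_ge : ∀ n, n ∈ H → (∀ m ∈ Stmt10Aux.MM H (r+1), ∃ h ∈ H, n + m = s + h) → n ∈ E := by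
    intro n hn hcol
    have hsn : s ≤ n := by
      by_contra hlt
      push_neg at hlt
      have hm : (s - n) + (c - 1) ∈ Stmt10Aux.MM H (r+1) := C1' _ (by omega)
      obtain ⟨h, hh, he⟩ := hcol _ hm
      have hhe : h = c - 1 := by omega
      exact hFH (hhe ▸ hh)
    refine ⟨n - s, ?_, by omega⟩
    intro m hm
    obtain ⟨h, hh, he⟩ := hcol m hm
    have hhe : n - s + m = h := by omega
    exact hhe ▸ hh
  have memI_supp : ∀ f, f ∈ I → Stmt10Aux.SuppIn f E := by
    intro f hf n hnE
    by_contra hc0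
    have hnH : n ∈ H := by
      by_contra h
      exact hc0 (f.2 n h)
    refine hnE (e_ge n hnH ?_)
    intro m hm
    have hmH : m ∈ H := Stmt10Aux.mm_mem_H _ m hm
    have h1 : tp k H m hmH ∈ mIdeal k H ^ (r+1) := Stmt10Aux.tp_mem_pow _ m hmH hm
    rw [hI] at hf
    have h2 := Submodule.mem_colon.1 hf _ h1
    rw [smul_eq_mul, hQ] at h2
    have h3 := Stmt10Aux.supp_of_mem_span s hs _ h2
    have h4 : PowerSeries.coeff (n + m) ((f * tp k H m hmH : ssr k H) : PowerSeries k) ≠ 0 := by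
      have hco : ((f * tp k H m hmH : ssr k H) : PowerSeries k)
          = (f : PowerSeries k) * (PowerSeries.X : PowerSeries k) ^ m := rfl
      rw [hco, PowerSeries.coeff_mul_X_pow]
      exact hc0
    by_contra hno
    exact h4 (h3 (n + m) hno)
  have supp_memI : ∀ h : ssr k H, Stmt10Aux.SuppIn h E → h ∈ I := by
    intro h hh
    rw [hI, Submodule.mem_colon]
    intro p hp
    rw [smul_eq_mul, hQ]
    apply Stmt10Aux.mem_span_of_supp
    refine Stmt10Aux.suppIn_mono ?_ (Stmt10Aux.suppIn_mul hh (Stmt10Aux.pow_suppIn r p hp))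
    rintro n ⟨i, ⟨x, hx, rfl⟩, j, hj, rfl⟩
    exact ⟨x + j, hx j hj, by omega⟩
  have hQle : Q ≤ I := by
    rw [hI]
    intro f hf
    rw [Submodule.mem_colon]
    intro p hp
    rw [smul_eq_mul]
    exact Ideal.mul_mem_right _ _ hf
  have htpQ : tp k H s hs ∈ Q := by
    rw [hQ]
    exact Ideal.subset_span rfl
  apply le_antisymm
  · rw [pow_two, Ideal.mul_le]
    intro f hf g hg
    have hsf := memI_supp f hf
    have hsg := memI_supp g hg
    have hprod : Stmt10Aux.SuppIn (f * g) {n | ∃ w ∈ E, n = s + w} := by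
      refine Stmt10Aux.suppIn_mono ?_ (Stmt10Aux.suppIn_mul hsf hsg)
      rintro n ⟨i, ⟨x, hx, rfl⟩, j, ⟨y, hy, rfl⟩, rfl⟩
      exact ⟨s + (x + y), ⟨x + y, kadd x hx y hy, rfl⟩, by omega⟩
    obtain ⟨h, hhE, heq⟩ := Stmt10Aux.factor s hs E hEH (f * g) hprod
    rw [heq]
    exact Ideal.mul_mem_mul htpQ (supp_memI h hhE)
  · rw [pow_two, Ideal.mul_le]
    intro f hf g hg
    exact Ideal.mul_mem_mul (hQle hf) hg
end

section
/- Under the setting of the main theorem (H symmetric, conditions (C1) and (C2) for q, Q = (t^s), I = Q : 𝔪^q), if s ≥ a(q−1), then I³ = QI², and moreover Q ∩ I^{n+1} = QI^n for all n ≥ 0, so the associated graded ring G(I) = ⊕_{n≥0} I^n/I^{n+1} is Cohen–Macaulay. -/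
set_option linter.unusedSectionVars false
set_option maxHeartbeats 16000000
set_option synthInstance.maxHeartbeats 1000000

open PowerSeries

namespace StmtAux

variable (k : Type) [Field k] (H : AddSubmonoid ℕ)

theorem coe_tp (n : ℕ) (hn : n ∈ H) : ((tp k H n hn : ssr k H) : PowerSeries k) = X ^ n := rfl

theorem tp_eq_of {n m : ℕ} (hn : n ∈ H) (hm : m ∈ H) (h : n = m) :
    tp k H n hn = tp k H m hm := by subst h; rfl

theorem tp_mul (u v : ℕ) (hu : u ∈ H) (hv : v ∈ H) :
    tp k H u hu * tp k H v hv = tp k H (u + v) (H.add_mem hu hv) := by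
  apply Subtype.ext
  show (X : PowerSeries k) ^ u * X ^ v = X ^ (u + v)
  rw [pow_add]

/-- The "support ideal" of a set `S ⊆ ℕ` stable under addition by `H`. -/
noncomputable def SI (S : Set ℕ) (hstab : ∀ n ∈ S, ∀ h ∈ H, n + h ∈ S) : Ideal (ssr k H) where
  carrier := {f | ∀ n : ℕ, n ∉ S → PowerSeries.coeff n (f : PowerSeries k) = 0}
  add_mem' := by
    intro f g hf hg n hn
    rw [Set.mem_setOf_eq] at hf hg
    rw [AddMemClass.coe_add, map_add, hf n hn, hg n hn, add_zero]
  zero_mem' := by intro n _; simp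
  smul_mem' := by
    intro c f hf n hn
    rw [Set.mem_setOf_eq] at hf
    rw [smul_eq_mul]
    show PowerSeries.coeff n ((c : PowerSeries k) * (f : PowerSeries k)) = 0
    rw [PowerSeries.coeff_mul]
    apply Finset.sum_eq_zero
    rintro ⟨i, j⟩ hij
    replace hij : i + j = n := by simpa using hij
    by_cases hj : j ∈ S
    · have hi : i ∉ H := fun hi => hn (hij ▸ (add_comm i j ▸ hstab j hj i hi))
      rw [c.2 i hi, zero_mul]
    · rw [hf j hj, mul_zero]

theorem mem_SI {S : Set ℕ} {hstab : ∀ n ∈ S, ∀ h ∈ H, n + h ∈ S} {f : ssr k H} :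
    f ∈ SI k H S hstab ↔ ∀ n : ℕ, n ∉ S → PowerSeries.coeff n (f : PowerSeries k) = 0 :=
  Iff.rfl

theorem tp_mem_SI {S : Set ℕ} {hstab : ∀ n ∈ S, ∀ h ∈ H, n + h ∈ S} {n : ℕ} {hn : n ∈ H} :
    tp k H n hn ∈ SI k H S hstab ↔ n ∈ S := by
  constructor
  · intro hmem
    by_contra h
    have := hmem n h
    rw [coe_tp, PowerSeries.coeff_X_pow, if_pos rfl] at this
    exact one_ne_zero this
  · intro hS m hm
    rw [coe_tp, PowerSeries.coeff_X_pow]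
    exact if_neg (fun e => hm (by rw [e]; exact hS))

theorem SI_mul_le {S T U : Set ℕ} {hS hT hU} (h : ∀ i ∈ S, ∀ j ∈ T, i + j ∈ U) :
    SI k H S hS * SI k H T hT ≤ SI k H U hU := by
  rw [Ideal.mul_le]
  intro r hr t ht n hn
  show PowerSeries.coeff n ((r : PowerSeries k) * (t : PowerSeries k)) = 0
  rw [PowerSeries.coeff_mul]
  apply Finset.sum_eq_zero
  rintro ⟨i, j⟩ hij
  replace hij : i + j = n := by simpa using hij
  by_cases hi : i ∈ S
  · by_cases hj : j ∈ T
    · exact absurd (hij ▸ h i hi j hj) hn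
    · rw [ht j hj, mul_zero]
  · rw [hr i hi, zero_mul]

/-- Generation lemma: if an ideal contains all monomials of `S`, it contains `SI S`. -/
theorem SI_le {S : Set ℕ} {hstab} (hSH : ∀ n ∈ S, n ∈ H) {c : ℕ} (hc : ∀ n, c ≤ n → n ∈ H)
    (J : Ideal (ssr k H)) (hJ : ∀ n, ∀ hn : n ∈ S, tp k H n (hSH n hn) ∈ J) :
    SI k H S hstab ≤ J := by
  classical
  intro f hf
  rw [mem_SI] at hf
  by_cases hne : ∃ e, e ∈ S
  · obtain ⟨e₀, he₀⟩ := hne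
    set N := e₀ + c with hN
    set g : PowerSeries k :=
      PowerSeries.mk (fun m => if N < m + e₀ then PowerSeries.coeff (m + e₀) (f : PowerSeries k) else 0)
      with hgdef
    have hg : g ∈ ssr k H := by
      intro m hm
      rw [hgdef, PowerSeries.coeff_mk]
      split
      · next hlt => exact absurd (hc m (by omega)) hm
      · rfl
    set term : ℕ → ssr k H := fun n =>
      if hn : n ∈ S then (PowerSeries.coeff n (f : PowerSeries k)) • tp k H n (hSH n hn) else 0
      with htermdef
    have hterm : ∀ n, term n ∈ J := by
      intro n
      by_cases hn : n ∈ S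
      · rw [htermdef]
        simp only [dif_pos hn]
        rw [Algebra.smul_def]
        exact Ideal.mul_mem_left J _ (hJ n hn)
      · rw [htermdef]; simp only [dif_neg hn]; exact J.zero_mem
    have key : f = (Finset.range (N + 1)).sum term + tp k H e₀ (hSH e₀ he₀) * ⟨g, hg⟩ := by
      apply Subtype.ext
      apply PowerSeries.ext
      intro n
      have hterm_coeff : ∀ i, PowerSeries.coeff n ((term i : ssr k H) : PowerSeries k) =
          if n = i then PowerSeries.coeff n (f : PowerSeries k) else 0 := by
        intro i
        by_cases hi : i ∈ S
        · rw [htermdef]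
          simp only [dif_pos hi]
          rw [SetLike.val_smul, map_smul, coe_tp, PowerSeries.coeff_X_pow, smul_eq_mul]
          by_cases hni : n = i
          · subst hni; simp
          · simp [hni]
        · rw [htermdef]
          simp only [dif_neg hi]
          by_cases hni : n = i
          · subst hni; simp [hf n hi]
          · simp [hni]
      have hsum : PowerSeries.coeff n (((Finset.range (N + 1)).sum term : ssr k H) : PowerSeries k) =
          if n ≤ N then PowerSeries.coeff n (f : PowerSeries k) else 0 := by
        rw [AddSubmonoidClass.coe_finset_sum, map_sum]
        rw [Finset.sum_congr rfl (fun i _ => hterm_coeff i)]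
        rw [Finset.sum_ite_eq (Finset.range (N + 1)) n
          (fun i => PowerSeries.coeff n (f : PowerSeries k))]
        simp [Finset.mem_range, Nat.lt_succ_iff]
      have hmulc : PowerSeries.coeff n ((tp k H e₀ (hSH e₀ he₀) * ⟨g, hg⟩ : ssr k H) : PowerSeries k) =
          if N < n then PowerSeries.coeff n (f : PowerSeries k) else 0 := by
        rw [MulMemClass.coe_mul, coe_tp]
        have hcoe : ((⟨g, hg⟩ : ssr k H) : PowerSeries k) = g := rfl
        rw [hcoe, PowerSeries.coeff_X_pow_mul']
        by_cases he : e₀ ≤ n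
        · rw [if_pos he, hgdef, PowerSeries.coeff_mk]
          have : n - e₀ + e₀ = n := by omega
          rw [this]
        · rw [if_neg he]
          have hnN : ¬ N < n := by omega
          rw [if_neg hnN]
      rw [AddMemClass.coe_add, map_add, hsum, hmulc]
      by_cases h : n ≤ N
      · rw [if_pos h, if_neg (by omega), add_zero]
      · rw [if_neg h, if_pos (by omega), zero_add]
    rw [key]
    exact J.add_mem (Submodule.sum_mem J fun i _ => hterm i)
      (Ideal.mul_mem_right _ J (hJ e₀ he₀))
  · have : f = 0 := by
      apply Subtype.ext
      apply PowerSeries.ext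
      intro n
      rw [hf n (fun h => hne ⟨n, h⟩)]
      simp
    rw [this]
    exact J.zero_mem

end StmtAux


namespace StmtAux2

/-- `Eset H j` : sums of `j` positive elements of `H`. -/
def Eset (H : AddSubmonoid ℕ) : ℕ → Set ℕ
  | 0 => {0}
  | j + 1 => {n | ∃ u, (u ∈ H ∧ u ≠ 0) ∧ ∃ e ∈ Eset H j, n = u + e}

variable {H : AddSubmonoid ℕ}

theorem Eset_subset_H : ∀ j, ∀ n ∈ Eset H j, n ∈ H := by
  intro j
  induction j with
  | zero => intro n hn; rw [Eset] at hn; cases hn; exact H.zero_mem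
  | succ j ih =>
    rintro n ⟨u, ⟨huH, _⟩, e, heE, rfl⟩
    exact H.add_mem huH (ih e heE)

theorem Eset_lb {a : ℕ} (hamin : ∀ n ∈ H, n ≠ 0 → a ≤ n) :
    ∀ j, ∀ n ∈ Eset H j, a * j ≤ n := by
  intro j
  induction j with
  | zero => intro n hn; rw [Eset] at hn; cases hn; simp
  | succ j ih =>
    rintro n ⟨u, ⟨huH, hu0⟩, e, heE, rfl⟩
    have h1 := hamin u huH hu0
    have h2 := ih e heE
    have : a * (j + 1) = a * j + a := by ring
    omega

theorem Eset_stab : ∀ j, ∀ n ∈ Eset H (j + 1), ∀ h ∈ H, n + h ∈ Eset H (j + 1) := by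
  intro j
  induction j with
  | zero =>
    rintro n ⟨u, ⟨huH, hu0⟩, e, heE, rfl⟩ h hh
    rw [Eset] at heE; cases heE
    exact ⟨u + h, ⟨H.add_mem huH hh, by omega⟩, 0, rfl, by omega⟩
  | succ j ih =>
    rintro n ⟨u, ⟨huH, hu0⟩, e, heE, rfl⟩ h hh
    exact ⟨u, ⟨huH, hu0⟩, e + h, ih e heE h hh, by omega⟩

/-- The dual set `T = {z : z + E_q ⊆ H}`. -/
def Tset (H : AddSubmonoid ℕ) (q : ℕ) : Set ℕ := {z | ∀ m ∈ Eset H q, z + m ∈ H}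

/-- Exponent set of the quasi-socle ideal `I = Q : 𝔪^q`. -/
def SsetD (H : AddSubmonoid ℕ) (q s : ℕ) : Set ℕ :=
  {x | x ∈ H ∧ ∀ m ∈ Eset H q, ∃ h ∈ H, x + m = s + h}

theorem SsetD_stab : ∀ x ∈ SsetD H q s, ∀ h ∈ H, x + h ∈ SsetD H q s := by
  rintro x ⟨hxH, hx⟩ h hh
  refine ⟨H.add_mem hxH hh, fun m hm => ?_⟩
  obtain ⟨h', hh', he⟩ := hx m hm
  exact ⟨h' + h, H.add_mem hh' hh, by omega⟩

theorem zero_mem_Tset {q : ℕ} : 0 ∈ Tset H q := by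
  intro m hm
  simpa using Eset_subset_H q m hm

section Comb

variable {a c q s : ℕ}
variable (hamin : ∀ n ∈ H, n ≠ 0 → a ≤ n)
variable (hc : ∀ n : ℕ, c ≤ n → n ∈ H)
variable (hF : c - 1 ∉ H)
variable (hsym1 : ∀ z, z ∉ H → z ≤ c - 1 ∧ (c - 1 - z) ∈ H)
variable (hK : ∀ v d, v ∈ H → v ≠ 0 → d ∈ H → a * (q - 1) ≤ d → v + d ∈ Eset H q)
variable (hq : 0 < q)
variable (hC1' : ∀ n, c ≤ n → n ∈ Eset H q)
variable (hsHH : s ∈ H) (hsaq : a * (q - 1) ≤ s)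

include hamin hF hsym1 hK hq in
theorem Tclosed : ∀ α β, α ∈ Tset H q → β ∈ Tset H q → α + β ∈ Tset H q := by
  intro α β hα hβ m hm
  by_contra hno
  obtain ⟨q', rfl⟩ : ∃ q', q = q' + 1 := ⟨q - 1, by omega⟩
  obtain ⟨u, ⟨huH, hu0⟩, e, heE, rfl⟩ := hm
  have heH : e ∈ H := Eset_subset_H q' e heE
  have helb : a * q' ≤ e := Eset_lb hamin q' e heE
  obtain ⟨hle, hw⟩ := hsym1 _ hno
  set w := c - 1 - (α + β + (u + e)) with hwdef
  have hkey : α + β + u + (e + w) = c - 1 := by omega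
  have he0H : e + w ∈ H := H.add_mem heH hw
  have hstep2 : β + (e + w) ∉ H := by
    intro hmem
    have h1 : u + (β + (e + w)) ∈ Eset H (q' + 1) :=
      hK u (β + (e + w)) huH hu0 hmem (by simp only [Nat.add_sub_cancel]; omega)
    have h2 := hα _ h1
    have h3 : α + (u + (β + (e + w))) = c - 1 := by omega
    rw [h3] at h2
    exact hF h2
  obtain ⟨hle2, hw2⟩ := hsym1 _ hstep2
  have hau : α + u ∈ H := by
    have h4 : c - 1 - (β + (e + w)) = α + u := by omega
    rwa [h4] at hw2
  have h5 : (α + u) + (e + w) ∈ Eset H (q' + 1) :=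
    hK (α + u) (e + w) hau (by omega) he0H (by simp only [Nat.add_sub_cancel]; omega)
  have h6 := hβ _ h5
  have h7 : β + ((α + u) + (e + w)) = c - 1 := by omega
  rw [h7] at h6
  exact hF h6

include hF hC1' in
theorem Sset_lb : ∀ x ∈ SsetD H q s, s ≤ x := by
  rintro x ⟨hxH, hx⟩
  by_contra hlt
  have hm : (c - 1) + s - x ∈ Eset H q := hC1' _ (by omega)
  obtain ⟨h', hh', he⟩ := hx _ hm
  have : h' = c - 1 := by omega
  exact hF (this ▸ hh')

include hF hC1' in
theorem mem_SsetD_iff {x : ℕ} :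
    x ∈ SsetD H q s ↔ x ∈ H ∧ s ≤ x ∧ (x - s) ∈ Tset H q := by
  constructor
  · intro hx
    have hlb := Sset_lb hF hC1' x hx
    refine ⟨hx.1, hlb, fun m hm => ?_⟩
    obtain ⟨h', hh', he⟩ := hx.2 m hm
    have : x - s + m = h' := by omega
    rwa [this]
  · rintro ⟨hxH, hlb, hT⟩
    exact ⟨hxH, fun m hm => ⟨(x - s) + m, hT m hm, by omega⟩⟩

include hamin hc hF hsym1 hK hq hC1' hsHH hsaq in
theorem L2lemma : ∀ x y h, x ∈ SsetD H q s → y ∈ SsetD H q s → h ∈ H →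
    x + y = s + h → h ∈ SsetD H q s := by
  intro x y h hx hy hhH he
  obtain ⟨hxH, hxlb, hxT⟩ := (mem_SsetD_iff hF hC1').mp hx
  obtain ⟨hyH, hylb, hyT⟩ := (mem_SsetD_iff hF hC1').mp hy
  refine (mem_SsetD_iff hF hC1').mpr ⟨hhH, by omega, ?_⟩
  have : h - s = (x - s) + (y - s) := by omega
  rw [this]
  exact Tclosed hamin hF hsym1 hK hq _ _ hxT hyT

include hamin hc hF hsym1 hK hq hC1' hsHH hsaq in
theorem L1lemma : ∀ x y z, x ∈ SsetD H q s → y ∈ SsetD H q s → z ∈ SsetD H q s →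
    ∃ x' y', x' ∈ SsetD H q s ∧ y' ∈ SsetD H q s ∧ x + y + z = s + (x' + y') := by
  intro x y z hx hy hz
  obtain ⟨hxH, hxlb, hxT⟩ := (mem_SsetD_iff hF hC1').mp hx
  obtain ⟨hyH, hylb, hyT⟩ := (mem_SsetD_iff hF hC1').mp hy
  obtain ⟨hzH, hzlb, hzT⟩ := (mem_SsetD_iff hF hC1').mp hz
  set α := x - s with hα
  set β := y - s with hβ
  set γ := z - s with hγ
  have hTc := Tclosed hamin hF hsym1 hK hq
  by_cases h1 : s + (β + γ) ∈ H
  · refine ⟨x, s + (β + γ), hx, (mem_SsetD_iff hF hC1').mpr ⟨h1, by omega, ?_⟩, by omega⟩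
    have : s + (β + γ) - s = β + γ := by omega
    rw [this]; exact hTc _ _ hyT hzT
  by_cases h2 : s + (α + γ) ∈ H
  · refine ⟨y, s + (α + γ), hy, (mem_SsetD_iff hF hC1').mpr ⟨h2, by omega, ?_⟩, by omega⟩
    have : s + (α + γ) - s = α + γ := by omega
    rw [this]; exact hTc _ _ hxT hzT
  by_cases h3 : s + (α + β) ∈ H
  · refine ⟨z, s + (α + β), hz, (mem_SsetD_iff hF hC1').mpr ⟨h3, by omega, ?_⟩, by omega⟩
    have : s + (α + β) - s = α + β := by omega
    rw [this]; exact hTc _ _ hxT hyT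
  · -- degenerate case
    have claim : ∀ δ ε, δ ∈ Tset H q → ε ∈ Tset H q → s + δ ∈ H → s + (δ + ε) ∉ H →
        c - 1 = s + δ + ε := by
      intro δ ε hδ hε hsδ hno
      obtain ⟨hle, hw⟩ := hsym1 _ hno
      set A := c - 1 - (s + (δ + ε)) with hA
      rcases Nat.eq_zero_or_pos A with hA0 | hApos
      · omega
      · exfalso
        have h5 : A + (s + δ) ∈ Eset H q := hK A (s + δ) hw (by omega) hsδ (by omega)
        have h6 := hε _ h5
        have h7 : ε + (A + (s + δ)) = c - 1 := by omega
        rw [h7] at h6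
        exact hF h6
    have e1 : c - 1 = s + β + γ := claim β γ hyT hzT (by
      have : s + β = y := by omega
      rwa [this]) h1
    have e2 : c - 1 = s + α + γ := claim α γ hxT hzT (by
      have : s + α = x := by omega
      rwa [this]) h2
    have e3 : c - 1 = s + α + β := claim α β hxT hyT (by
      have : s + α = x := by omega
      rwa [this]) h3
    have hαβγ : α = β ∧ β = γ := by omega
    have hα0 : α ≠ 0 := by
      intro h0
      apply hF
      have : c - 1 = s := by omega
      rwa [this]
    have hy'H : s + (α + (α + α)) ∈ H := hc _ (by omega)
    refine ⟨s, s + (α + (α + α)), (mem_SsetD_iff hF hC1').mpr ⟨hsHH, le_rfl, by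
        simpa using zero_mem_Tset⟩,
      (mem_SsetD_iff hF hC1').mpr ⟨hy'H, by omega, ?_⟩, by omega⟩
    have : s + (α + (α + α)) - s = α + (α + α) := by omega
    rw [this]
    exact hTc _ _ hxT (hTc _ _ hxT hxT)

end Comb
end StmtAux2

namespace StmtAux
open StmtAux2

variable (k : Type) [Field k] (H : AddSubmonoid ℕ)

def sHset (s : ℕ) : Set ℕ := {n | ∃ h ∈ H, n = s + h}

theorem sHset_stab {s : ℕ} : ∀ n ∈ sHset H s, ∀ h ∈ H, n + h ∈ sHset H s := by
  rintro n ⟨h', hh', rfl⟩ h hh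
  exact ⟨h' + h, H.add_mem hh' hh, by omega⟩

def sum2 (A B : Set ℕ) : Set ℕ := {n | ∃ x ∈ A, ∃ y ∈ B, n = x + y}

theorem sum2_stab {A B : Set ℕ} (hB : ∀ n ∈ B, ∀ h ∈ H, n + h ∈ B) :
    ∀ n ∈ sum2 A B, ∀ h ∈ H, n + h ∈ sum2 A B := by
  rintro n ⟨x, hx, y, hy, rfl⟩ h hh
  exact ⟨x, hx, y + h, hB y hy h hh, by omega⟩

theorem tp_mem_mpow : ∀ (j m : ℕ) (hm : m ∈ Eset H j),
    tp k H m (Eset_subset_H j m hm) ∈ mIdeal k H ^ j := by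
  intro j
  induction j with
  | zero =>
    intro m hm
    have hm' : m = 0 := hm
    subst hm'
    have h1 : tp k H 0 (Eset_subset_H 0 0 rfl) = 1 := Subtype.ext (pow_zero _)
    rw [h1, pow_zero, Ideal.one_eq_top]
    exact Submodule.mem_top
  | succ j ih =>
    rintro m ⟨u, ⟨huH, hu0⟩, e, heE, rfl⟩
    have h1 : tp k H (u + e) (Eset_subset_H (j+1) (u+e) ⟨u, ⟨huH, hu0⟩, e, heE, rfl⟩) =
        tp k H u huH * tp k H e (Eset_subset_H j e heE) := by
      rw [tp_mul]
    rw [h1, pow_succ' (mIdeal k H) j]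
    exact Ideal.mul_mem_mul (Ideal.subset_span ⟨u, huH, by omega, rfl⟩) (ih e heE)

theorem mIdeal_le_SI : ∀ (j : ℕ),
    mIdeal k H ^ (j + 1) ≤ SI k H (Eset H (j + 1)) (Eset_stab j) := by
  intro j
  induction j with
  | zero =>
    rw [pow_one]
    apply Ideal.span_le.mpr
    rintro x ⟨n, hn, hpos, rfl⟩
    exact (tp_mem_SI k H).mpr ⟨n, ⟨hn, by omega⟩, 0, rfl, by omega⟩
  | succ j ih =>
    rw [pow_succ]
    have hbase : mIdeal k H ≤ SI k H (Eset H 1) (Eset_stab 0) := by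
      apply Ideal.span_le.mpr
      rintro x ⟨n, hn, hpos, rfl⟩
      exact (tp_mem_SI k H).mpr ⟨n, ⟨hn, by omega⟩, 0, rfl, by omega⟩
    have hcomb : ∀ i ∈ Eset H (j + 1), ∀ jj ∈ Eset H 1, i + jj ∈ Eset H (j + 1 + 1) := by
      rintro i hi jj ⟨u, ⟨huH, hu0⟩, e, he, rfl⟩
      have he0 : e = 0 := he
      exact ⟨u, ⟨huH, hu0⟩, i, hi, by omega⟩
    exact le_trans (Ideal.mul_mono ih hbase)
      (SI_mul_le k H (hS := Eset_stab j) (hT := Eset_stab 0) (hU := Eset_stab (j + 1)) hcomb)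

end StmtAux

open StmtAux StmtAux2 in
/-- Theorem 2.1 (3): under (C1) and (C2), if `s ≥ a(q-1)` then `I³ = QI²` and
`Q ∩ I^{n+1} = QI^n` for all `n`, so the associated graded ring `G(I)` is Cohen-Macaulay. -/
theorem stmt11 (k : Type) [Field k] (H : AddSubmonoid ℕ) (hfin : (Set.univ \ (H : Set ℕ)).Finite)
    (a : ℕ) (haH : a ∈ H) (ha0 : a ≠ 0) (hamin : ∀ n ∈ H, n ≠ 0 → a ≤ n)
    (c : ℕ) (hc : ∀ n : ℕ, c ≤ n → n ∈ H) (hcmin : ∀ m : ℕ, (∀ n : ℕ, m ≤ n → n ∈ H) → c ≤ m)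
    (hsym : ∀ n : ℕ, n ≤ c - 1 → (n ∈ H ↔ (c - 1 - n) ∉ H))
    (q : ℕ) (hq : 0 < q)
    (hC1 : ∀ n : ℕ, ∀ hn : c ≤ n, tp k H n (hc n hn) ∈ mIdeal k H ^ q)
    (hC2 : ∀ (n : ℕ) (hn : n ∈ H), tp k H n hn ∉ mIdeal k H ^ (q - 1) → n < a * (q - 1))
    (s : ℕ) (hs : s ∈ H) (hs0 : 0 < s)
    (Q : Ideal (ssr k H)) (hQ : Q = Ideal.span {tp k H s hs})
    (I : Ideal (ssr k H)) (hI : I = Submodule.colon Q ((mIdeal k H ^ q : Ideal (ssr k H)) : Set (ssr k H)))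
    (hsaq : a * (q - 1) ≤ s) :
    I ^ 3 = Q * I ^ 2 ∧ ∀ n : ℕ, Q ⊓ I ^ (n + 1) = Q * I ^ n := by
  classical
  -- basic symmetry facts
  have hc1 : 1 ≤ c := by
    by_contra hlt
    have h0 : c = 0 := by omega
    have h1 := hsym 0 (by omega)
    rw [h0] at h1
    have h2 : (0:ℕ) - 1 - 0 = 0 := rfl
    rw [h2] at h1
    exact (h1.mp H.zero_mem) H.zero_mem
  have hF : c - 1 ∉ H := by
    have h1 := hsym (c - 1) le_rfl
    rw [Nat.sub_self] at h1
    intro h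
    exact (h1.mp h) H.zero_mem
  have hsym1 : ∀ z, z ∉ H → z ≤ c - 1 ∧ (c - 1 - z) ∈ H := by
    intro z hz
    have hzc : z ≤ c - 1 := by
      by_contra h
      exact hz (hc z (by omega))
    refine ⟨hzc, ?_⟩
    by_contra h
    exact hz ((hsym z hzc).mpr h)
  -- stability of Eset q
  have hstabq : ∀ n ∈ Eset H q, ∀ h ∈ H, n + h ∈ Eset H q := by
    obtain ⟨q', rfl⟩ : ∃ q', q = q' + 1 := ⟨q - 1, by omega⟩
    exact Eset_stab q'
  have hMq_le : mIdeal k H ^ q ≤ SI k H (Eset H q) hstabq := by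
    obtain ⟨q', rfl⟩ : ∃ q', q = q' + 1 := ⟨q - 1, by omega⟩
    exact mIdeal_le_SI k H q'
  -- condition (C1) in combinatorial form
  have hC1' : ∀ n, c ≤ n → n ∈ Eset H q := by
    intro n hn
    exact (tp_mem_SI k H).mp (hMq_le (hC1 n hn))
  -- the key lemma (K), using (C2)
  have hK : ∀ v d, v ∈ H → v ≠ 0 → d ∈ H → a * (q - 1) ≤ d → v + d ∈ Eset H q := by
    intro v d hv hv0 hd hdlb
    obtain ⟨q', rfl⟩ : ∃ q', q = q' + 1 := ⟨q - 1, by omega⟩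
    simp only [Nat.add_sub_cancel] at hdlb
    cases q' with
    | zero => exact ⟨v + d, ⟨H.add_mem hv hd, by omega⟩, 0, rfl, by omega⟩
    | succ j =>
      have hdE : d ∈ Eset H (j + 1) := by
        have htp : tp k H d hd ∈ mIdeal k H ^ (j + 1) := by
          by_contra hno
          have h9 := hC2 d hd hno
          simp only [Nat.add_sub_cancel] at h9
          omega
        exact (tp_mem_SI k H).mp (mIdeal_le_SI k H j htp)
      exact ⟨v, ⟨hv, hv0⟩, d, hdE, rfl⟩
  -- ideal translations
  have hQ_le_SIsH : Q ≤ SI k H (sHset H s) (sHset_stab H) := by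
    rw [hQ]
    apply Ideal.span_le.mpr
    intro x hx
    rw [Set.mem_singleton_iff] at hx
    subst hx
    exact (tp_mem_SI k H).mpr ⟨0, H.zero_mem, by omega⟩
  have hSIsH_le_Q : SI k H (sHset H s) (sHset_stab H) ≤ Q := by
    intro x hx
    rw [mem_SI] at hx
    set g : PowerSeries k := PowerSeries.mk
      (fun m => PowerSeries.coeff (m + s) (x : PowerSeries k)) with hgdef
    have hg : g ∈ ssr k H := by
      intro m hm
      rw [hgdef, PowerSeries.coeff_mk]
      apply hx
      rintro ⟨h, hh, he⟩
      have : m = h := by omega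
      exact hm (this ▸ hh)
    rw [hQ, Ideal.mem_span_singleton]
    refine ⟨⟨g, hg⟩, ?_⟩
    apply Subtype.ext
    apply PowerSeries.ext
    intro n
    rw [MulMemClass.coe_mul, coe_tp]
    have hcoe : ((⟨g, hg⟩ : ssr k H) : PowerSeries k) = g := rfl
    rw [hcoe, PowerSeries.coeff_X_pow_mul']
    by_cases he : s ≤ n
    · rw [if_pos he, hgdef, PowerSeries.coeff_mk]
      have : n - s + s = n := by omega
      rw [this]
    · rw [if_neg he]
      refine hx n ?_
      rintro ⟨h, hh, he2⟩
      omega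
  have hQ_le_I : Q ≤ I := by
    rw [hI]
    intro x hx
    apply Submodule.mem_colon.mpr
    intro p hp
    rw [smul_eq_mul]
    exact Ideal.mul_mem_right p Q hx
  -- I = SI (SsetD H q s)
  have hI_le : I ≤ SI k H (SsetD H q s) SsetD_stab := by
    intro x hx
    rw [hI] at hx
    intro n hn
    by_contra hne
    have hnH : n ∈ H := by
      by_contra h
      exact hne (x.2 n h)
    have hnot : ¬ (∀ m ∈ Eset H q, ∃ h ∈ H, n + m = s + h) := fun hall => hn ⟨hnH, hall⟩
    push_neg at hnot
    obtain ⟨m, hm, hnm⟩ := hnot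
    have h1 : x * tp k H m (Eset_subset_H q m hm) ∈ Q := by
      have h2 := Submodule.mem_colon.mp hx _ (tp_mem_mpow k H q m hm)
      rwa [smul_eq_mul] at h2
    have h3 := hQ_le_SIsH h1 (n + m) (by
      rintro ⟨h, hh, he⟩
      exact hnm h hh he)
    rw [MulMemClass.coe_mul, coe_tp, PowerSeries.coeff_mul_X_pow] at h3
    exact hne h3
  have hle_I : SI k H (SsetD H q s) SsetD_stab ≤ I := by
    intro x hx
    rw [mem_SI] at hx
    rw [hI]
    apply Submodule.mem_colon.mpr
    intro p hp
    rw [smul_eq_mul]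
    apply hSIsH_le_Q
    intro n hn
    rw [MulMemClass.coe_mul, PowerSeries.coeff_mul]
    apply Finset.sum_eq_zero
    rintro ⟨i, j⟩ hij
    replace hij : i + j = n := by simpa using hij
    by_cases hiS : i ∈ SsetD H q s
    · by_cases hjE : j ∈ Eset H q
      · exfalso
        obtain ⟨h', hh', he⟩ := hiS.2 j hjE
        exact hn ⟨h', hh', by omega⟩
      · rw [hMq_le hp j hjE, mul_zero]
    · rw [hx i hiS, zero_mul]
  -- powers of I
  have hstab2 : ∀ n ∈ sum2 (SsetD H q s) (SsetD H q s), ∀ h ∈ H, n + h ∈ sum2 (SsetD H q s) (SsetD H q s) :=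
    sum2_stab H SsetD_stab
  have hstab3 : ∀ n ∈ sum2 (sum2 (SsetD H q s) (SsetD H q s)) (SsetD H q s), ∀ h ∈ H,
      n + h ∈ sum2 (sum2 (SsetD H q s) (SsetD H q s)) (SsetD H q s) :=
    sum2_stab H SsetD_stab
  have hI2_le : I ^ 2 ≤ SI k H (sum2 (SsetD H q s) (SsetD H q s)) hstab2 := by
    rw [sq]
    refine le_trans (Ideal.mul_mono hI_le hI_le) (SI_mul_le k H ?_)
    intro i hi j hj
    exact ⟨i, hi, j, hj, rfl⟩
  have hI3_le : I ^ 3 ≤ SI k H (sum2 (sum2 (SsetD H q s) (SsetD H q s)) (SsetD H q s)) hstab3 := by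
    have h1 : I ^ 3 = I ^ 2 * I := pow_succ I 2
    rw [h1]
    refine le_trans (Ideal.mul_mono hI2_le hI_le) (SI_mul_le k H ?_)
    intro i hi j hj
    exact ⟨i, hi, j, hj, rfl⟩
  -- subset-of-H facts
  have hS_subH : ∀ n ∈ SsetD H q s, n ∈ H := fun n hn => hn.1
  have hS2_subH : ∀ n ∈ sum2 (SsetD H q s) (SsetD H q s), n ∈ H := by
    rintro n ⟨x, hx, y, hy, rfl⟩
    exact H.add_mem hx.1 hy.1
  have hS3_subH : ∀ n ∈ sum2 (sum2 (SsetD H q s) (SsetD H q s)) (SsetD H q s), n ∈ H := by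
    rintro n ⟨w, hw, z, hz, rfl⟩
    exact H.add_mem (hS2_subH w hw) hz.1
  have htpQ : tp k H s hs ∈ Q := by
    rw [hQ]
    exact Ideal.subset_span rfl
  -- I^3 = Q * I^2
  have goal1 : I ^ 3 = Q * I ^ 2 := by
    refine le_antisymm (le_trans hI3_le ?_) ?_
    · refine SI_le k H hS3_subH hc (Q * I ^ 2) ?_
      rintro n ⟨w, ⟨x, hx, y, hy, rfl⟩, z, hz, rfl⟩
      obtain ⟨x', y', hx', hy', heq⟩ :=
        L1lemma hamin hc hF hsym1 hK hq hC1' hs hsaq x y z hx hy hz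
      have h2 : tp k H (x + y + z) (hS3_subH _ ⟨x + y, ⟨x, hx, y, hy, rfl⟩, z, hz, rfl⟩) =
          tp k H s hs * (tp k H x' hx'.1 * tp k H y' hy'.1) := by
        rw [tp_mul, tp_mul]
        exact tp_eq_of k H _ _ heq
      rw [h2]
      refine Ideal.mul_mem_mul htpQ ?_
      rw [sq]
      exact Ideal.mul_mem_mul (hle_I ((tp_mem_SI k H).mpr hx'))
        (hle_I ((tp_mem_SI k H).mpr hy'))
    · calc Q * I ^ 2 ≤ I * I ^ 2 := Ideal.mul_mono hQ_le_I le_rfl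
        _ = I ^ 3 := (pow_succ' I 2).symm
  -- Q ⊓ I^2 = Q * I
  have goal2 : Q ⊓ I ^ 2 = Q * I := by
    have hup : Q * I ≤ Q ⊓ I ^ 2 := by
      apply le_inf
      · exact Ideal.mul_le_left
      · rw [sq]
        exact Ideal.mul_mono hQ_le_I le_rfl
    have hstabi : ∀ n ∈ sHset H s ∩ sum2 (SsetD H q s) (SsetD H q s), ∀ h ∈ H,
        n + h ∈ sHset H s ∩ sum2 (SsetD H q s) (SsetD H q s) := by
      intro n hn h hh
      exact ⟨sHset_stab H n hn.1 h hh, hstab2 n hn.2 h hh⟩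
    have hsubi : ∀ n ∈ sHset H s ∩ sum2 (SsetD H q s) (SsetD H q s), n ∈ H :=
      fun n hn => hS2_subH n hn.2
    have hgen : ∀ n, ∀ hn : n ∈ sHset H s ∩ sum2 (SsetD H q s) (SsetD H q s),
        tp k H n (hsubi n hn) ∈ Q * I := by
      rintro n ⟨⟨h', hh', heqn⟩, x, hx, y, hy, heq2⟩
      have hh'S : h' ∈ SsetD H q s :=
        L2lemma hamin hc hF hsym1 hK hq hC1' hs hsaq x y h' hx hy hh' (by omega)
      have h2 : tp k H n (hsubi n ⟨⟨h', hh', heqn⟩, x, hx, y, hy, heq2⟩) =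
          tp k H s hs * tp k H h' hh'S.1 := by
        rw [tp_mul]
        exact tp_eq_of k H _ _ heqn
      rw [h2]
      exact Ideal.mul_mem_mul htpQ (hle_I ((tp_mem_SI k H).mpr hh'S))
    have hdown : SI k H (sHset H s ∩ sum2 (SsetD H q s) (SsetD H q s)) hstabi ≤ Q * I :=
      SI_le k H hsubi hc (Q * I) hgen
    refine le_antisymm ?_ hup
    intro f hfm
    rw [Submodule.mem_inf] at hfm
    obtain ⟨hfQ, hfI2⟩ := hfm
    have hf1 := hQ_le_SIsH hfQ
    have hf2 := hI2_le hfI2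
    apply hdown
    rw [mem_SI]
    rw [mem_SI] at hf1 hf2
    intro n hn
    by_cases h : n ∈ sHset H s
    · exact hf2 n (fun h2 => hn ⟨h, h2⟩)
    · exact hf1 n h
  refine ⟨goal1, ?_⟩
  have hpow : ∀ m, I ^ (m + 2) = Q ^ m * I ^ 2 := by
    intro m
    induction m with
    | zero => rw [pow_zero, one_mul]
    | succ n ih =>
      calc I ^ (n + 3) = I * I ^ (n + 2) := pow_succ' I (n + 2)
        _ = I * (Q ^ n * I ^ 2) := by rw [ih]
        _ = Q ^ n * (I ^ 3) := by rw [mul_left_comm, ← pow_succ']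
        _ = Q ^ n * (Q * I ^ 2) := by rw [goal1]
        _ = Q ^ (n + 1) * I ^ 2 := by rw [← mul_assoc, ← pow_succ]
  intro n
  match n with
  | 0 =>
    rw [pow_one, pow_zero, mul_one]
    exact inf_eq_left.mpr hQ_le_I
  | 1 =>
    rw [pow_one]
    exact goal2
  | (m + 2) =>
    have hsub : I ^ (m + 3) ≤ Q := by
      rw [show m + 3 = (m + 1) + 2 by omega, hpow (m + 1)]
      exact le_trans Ideal.mul_le_left (Ideal.pow_le_self (by omega))
    rw [inf_eq_right.mpr hsub]
    rw [show m + 3 = (m + 1) + 2 by omega, hpow (m + 1), hpow m]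
    rw [← mul_assoc, ← pow_succ']
end

section
/- Let A = k[[t^a, t^{a+1}]] with a ≥ 2, q < a a positive integer, 0 < s ∈ H = ⟨a, a+1⟩ with s ≥ aq, Q = (t^s), I = Q : 𝔪^q. Then I² = QI. -/
set_option maxHeartbeats 1000000
set_option synthInstance.maxHeartbeats 1000000

open PowerSeries

/-- `gH a n` : `n` is in the numerical semigroup `⟨a, a+1⟩`. -/
def gH (a n : ℕ) : Prop := ∃ i : ℕ, i * a ≤ n ∧ n ≤ i * a + i

lemma gH_add {a m n : ℕ} (hm : gH a m) (hn : gH a n) : gH a (m + n) := by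
  obtain ⟨i, hi1, hi2⟩ := hm
  obtain ⟨j, hj1, hj2⟩ := hn
  refine ⟨i + j, ?_, ?_⟩ <;> rw [add_mul] <;> linarith

lemma gH_tail {a n : ℕ} (ha : 1 ≤ a) (h : (a - 1) * a ≤ n) : gH a n := by
  have h0 : 0 < a := by omega
  have h1 : n % a < a := Nat.mod_lt _ h0
  have h2 : a - 1 ≤ n / a := (Nat.le_div_iff_mul_le h0).mpr h
  have h3 : n / a * a + n % a = n := Nat.div_add_mod' n a
  have h4 : n % a ≤ n / a := le_trans (Nat.le_pred_of_lt h1) h2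
  refine ⟨n / a, ?_, ?_⟩ <;> linarith [Nat.div_mul_le_self n a]

/-- Lemma A : a run `m, m+1, …, m+q` inside `⟨a,a+1⟩` with `q < a` is either in
a single block or beyond the conductor. -/
lemma blockOrTail {a q m : ℕ} (ha : 2 ≤ a)
    (h : ∀ j ≤ q, gH a (m + j)) :
    (∃ i r, r + q ≤ i ∧ m = i * a + r) ∨ (a - 1) * a ≤ m := by
  by_cases htail : (a - 1) * a ≤ m
  · exact Or.inr htail
  left
  obtain ⟨i, hi1, hi2⟩ := h 0 (Nat.zero_le _)
  rw [Nat.add_zero] at hi1 hi2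
  obtain ⟨r, hri, hmr⟩ : ∃ r, r ≤ i ∧ m = i * a + r :=
    ⟨m - i * a, by omega, by omega⟩
  by_cases hblock : r + q ≤ i
  · exact ⟨i, r, hblock, hmr⟩
  exfalso
  have hia : i + 1 ≤ a - 1 := by
    by_contra hcon
    have : (a - 1) * a ≤ i * a := Nat.mul_le_mul_right a (by omega)
    omega
  have hj0 : i - r + 1 ≤ q := by omega
  obtain ⟨i', h1', h2'⟩ := h (i - r + 1) hj0
  have hm' : m + (i - r + 1) = i * a + i + 1 := by omega
  rw [hm'] at h1' h2'
  rcases le_or_gt i' i with hle | hlt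
  · have : i' * a ≤ i * a := Nat.mul_le_mul_right a hle
    omega
  · have : (i + 1) * a ≤ i' * a := Nat.mul_le_mul_right a hlt
    have : i * a + a ≤ i' * a := by linarith [add_mul i 1 a]
    omega

/-- A run of length `q+1` starts at least at `q*a`. -/
lemma run_ge {a q m : ℕ} (ha : 2 ≤ a) (hqa : q < a)
    (h : ∀ j ≤ q, gH a (m + j)) : q * a ≤ m := by
  rcases blockOrTail ha h with ⟨i, r, hri, rfl⟩ | htail
  · have : q * a ≤ i * a := Nat.mul_le_mul_right a (by omega)
    omega
  · have : q * a ≤ (a - 1) * a := Nat.mul_le_mul_right a (by omega)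
    omega

/-- Runs are closed under `(m₁, m₂) ↦ m₁ + m₂ - q*a`. -/
lemma run_add {a q m₁ m₂ : ℕ} (ha : 2 ≤ a) (hqa : q < a)
    (h₁ : ∀ j ≤ q, gH a (m₁ + j)) (h₂ : ∀ j ≤ q, gH a (m₂ + j)) :
    ∀ j ≤ q, gH a (m₁ + m₂ - q * a + j) := by
  intro j hj
  have g₁ := run_ge ha hqa h₁
  have g₂ := run_ge ha hqa h₂
  rcases blockOrTail ha h₁ with ⟨i₁, r₁, hri₁, rfl⟩ | ht₁
  · rcases blockOrTail ha h₂ with ⟨i₂, r₂, hri₂, rfl⟩ | ht₂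
    · -- both block
      obtain ⟨d₁, rfl⟩ : ∃ d, i₁ = q + d := ⟨i₁ - q, by omega⟩
      have e1 : (q + d₁) * a = q * a + d₁ * a := add_mul _ _ _
      have e2 : (d₁ + i₂) * a = d₁ * a + i₂ * a := add_mul _ _ _
      have he : (q + d₁) * a + r₁ + (i₂ * a + r₂) - q * a + j
          = (d₁ + i₂) * a + (r₁ + r₂ + j) := by omega
      rw [he]
      exact ⟨d₁ + i₂, by omega, by omega⟩
    · exact gH_tail (by omega) (by omega)
  · have : (a - 1) * a ≤ m₁ + m₂ - q * a + j := by omega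
    exact gH_tail (by omega) this

/-- Adding the "cofactor" `t - q*a` of an element `t ∈ ⟨a,a+1⟩`, `t ≥ q*a`,
to a run keeps us in the semigroup. -/
lemma run_addc {a q m t : ℕ} (ha : 2 ≤ a) (hqa : q < a)
    (h : ∀ j ≤ q, gH a (m + j)) (ht : gH a t) (htq : q * a ≤ t) :
    gH a (m + (t - q * a)) := by
  rcases blockOrTail ha h with ⟨i, r, hri, rfl⟩ | htail
  · obtain ⟨d, rfl⟩ : ∃ d, i = q + d := ⟨i - q, by omega⟩
    have e1 : (q + d) * a = q * a + d * a := add_mul _ _ _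
    have he : (q + d) * a + r + (t - q * a) = (d * a + r) + t := by omega
    rw [he]
    exact gH_add ⟨d, by omega, by omega⟩ ht
  · exact gH_tail (by omega) (by omega)

lemma closure_mem_iff (a n : ℕ) :
    n ∈ AddSubmonoid.closure ({a, a + 1} : Set ℕ) ↔ gH a n := by
  constructor
  · intro hn
    induction hn using AddSubmonoid.closure_induction with
    | mem x hx =>
      rcases hx with rfl | hx
      · exact ⟨1, by omega⟩
      · rw [Set.mem_singleton_iff] at hx
        subst hx
        exact ⟨1, by omega⟩
    | zero => exact ⟨0, by omega⟩
    | add x y _ _ hx hy => exact gH_add hx hy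
  · rintro ⟨i, hi1, hi2⟩
    obtain ⟨r, hri, rfl⟩ : ∃ r, r ≤ i ∧ n = i * a + r := ⟨n - i * a, by omega, by omega⟩
    obtain ⟨d, rfl⟩ : ∃ d, i = r + d := ⟨i - r, by omega⟩
    have haH : a ∈ AddSubmonoid.closure ({a, a + 1} : Set ℕ) :=
      AddSubmonoid.subset_closure (Set.mem_insert _ _)
    have ha1H : a + 1 ∈ AddSubmonoid.closure ({a, a + 1} : Set ℕ) :=
      AddSubmonoid.subset_closure (Set.mem_insert_of_mem _ rfl)
    have : d • a + r • (a + 1) ∈ AddSubmonoid.closure ({a, a + 1} : Set ℕ) :=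
      AddSubmonoid.add_mem _ (nsmul_mem haH d) (nsmul_mem ha1H r)
    convert this using 1
    simp only [smul_eq_mul]
    ring


section PS
variable {k : Type} [Field k] {H : AddSubmonoid ℕ}

lemma ssr_coeff (f : ssr k H) {n : ℕ} (h : coeff n f.1 ≠ 0) : n ∈ H := by
  by_contra hn
  exact h (f.2 n hn)

lemma coeff_mul_ne_zero {f g : PowerSeries k} {n : ℕ}
    (h : coeff n (f * g) ≠ 0) :
    ∃ i j, i + j = n ∧ coeff i f ≠ 0 ∧ coeff j g ≠ 0 := by
  rw [coeff_mul] at h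
  obtain ⟨⟨i, j⟩, hij, hne⟩ := Finset.exists_ne_zero_of_sum_ne_zero h
  rw [Finset.HasAntidiagonal.mem_antidiagonal] at hij
  exact ⟨i, j, hij, fun h0 => hne (by rw [h0, zero_mul]),
    fun h0 => hne (by rw [h0, mul_zero])⟩

lemma eq_shift_mul_X_pow (f : PowerSeries k) (s : ℕ)
    (h : ∀ n, coeff n f ≠ 0 → s ≤ n) :
    f = (PowerSeries.mk fun n => coeff (n + s) f) * X ^ s := by
  ext n
  rw [PowerSeries.coeff_mul_X_pow']
  split_ifs with hn
  · rw [coeff_mk, Nat.sub_add_cancel hn]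
  · by_contra h0
    exact hn (h n h0)
end PS


section PS2
variable {k : Type} [Field k] {H : AddSubmonoid ℕ} {a : ℕ}

lemma supp_m (haH : a ∈ H) (ha1H : a + 1 ∈ H)
    {𝔪 : Ideal (ssr k H)} (h𝔪 : 𝔪 = Ideal.span {tp k H a haH, tp k H (a + 1) ha1H}) :
    ∀ p ∈ 𝔪, ∀ n, coeff n (p : PowerSeries k) ≠ 0 →
      ∃ j h, j ≤ 1 ∧ h ∈ H ∧ n = a + j + h := by
  intro p hp
  subst h𝔪
  induction hp using Submodule.span_induction with
  | mem x hx =>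
    intro n hn
    rcases hx with rfl | hx
    · refine ⟨0, 0, by omega, H.zero_mem, ?_⟩
      have : coeff n ((X : PowerSeries k) ^ a) ≠ 0 := hn
      rw [coeff_X_pow] at this
      by_contra hne
      exact this (if_neg (by omega))
    · rw [Set.mem_singleton_iff] at hx
      subst hx
      refine ⟨1, 0, le_rfl, H.zero_mem, ?_⟩
      have : coeff n ((X : PowerSeries k) ^ (a + 1)) ≠ 0 := hn
      rw [coeff_X_pow] at this
      by_contra hne
      exact this (if_neg (by omega))
  | zero => intro n hn; simp at hn
  | add x y _ _ ihx ihy =>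
    intro n hn
    have : coeff n (x : PowerSeries k) ≠ 0 ∨ coeff n (y : PowerSeries k) ≠ 0 := by
      by_contra hc
      push_neg at hc
      have : coeff n ((x : PowerSeries k) + (y : PowerSeries k)) = 0 := by
        rw [map_add, hc.1, hc.2, add_zero]
      exact hn this
    rcases this with h | h
    · exact ihx n h
    · exact ihy n h
  | smul r x _ ih =>
    intro n hn
    have hn' : coeff n ((r : PowerSeries k) * (x : PowerSeries k)) ≠ 0 := hn
    obtain ⟨i, j, hij, hi, hj⟩ := coeff_mul_ne_zero hn'
    obtain ⟨j', h', hj', hh', rfl⟩ := ih j hj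
    exact ⟨j', h' + i, hj', H.add_mem hh' (ssr_coeff r hi), by omega⟩

lemma supp_m_pow (haH : a ∈ H) (ha1H : a + 1 ∈ H)
    {𝔪 : Ideal (ssr k H)} (h𝔪 : 𝔪 = Ideal.span {tp k H a haH, tp k H (a + 1) ha1H}) :
    ∀ (m : ℕ) (p : ssr k H), p ∈ 𝔪 ^ m → ∀ n, coeff n (p : PowerSeries k) ≠ 0 →
      ∃ j h, j ≤ m ∧ h ∈ H ∧ n = m * a + j + h := by
  intro m
  induction m with
  | zero =>
    intro p _ n hn
    exact ⟨0, n, le_rfl, ssr_coeff p hn, by omega⟩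
  | succ m ih =>
    intro p hp
    rw [pow_succ] at hp
    refine Submodule.mul_induction_on hp (fun x hx y hy => ?_) (fun x y ihx ihy => ?_)
    · intro n hn
      have hn' : coeff n ((x : PowerSeries k) * (y : PowerSeries k)) ≠ 0 := hn
      obtain ⟨i, j, hij, hi, hj⟩ := coeff_mul_ne_zero hn'
      obtain ⟨j₁, h₁, hj₁, hh₁, rfl⟩ := ih x hx i hi
      obtain ⟨j₂, h₂, hj₂, hh₂, rfl⟩ := supp_m haH ha1H h𝔪 y hy j hj
      refine ⟨j₁ + j₂, h₁ + h₂, by omega, H.add_mem hh₁ hh₂, ?_⟩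
      have : (m + 1) * a = m * a + a := by ring
      omega
    · intro n hn
      have : coeff n ((x : PowerSeries k) + (y : PowerSeries k)) ≠ 0 := hn
      have h2 : coeff n (x : PowerSeries k) ≠ 0 ∨ coeff n (y : PowerSeries k) ≠ 0 := by
        by_contra hc
        push_neg at hc
        rw [map_add, hc.1, hc.2, add_zero] at this
        exact this rfl
      rcases h2 with h | h
      · exact ihx n h
      · exact ihy n h
end PS2

/-- Corollary 3.4 (1): if `q < a` and `s ≥ aq` then `I² = QI`. -/
theorem stmt13 (k : Type) [Field k] (a : ℕ) (ha : 2 ≤ a)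
    (H : AddSubmonoid ℕ) (hH : H = AddSubmonoid.closure {a, a + 1})
    (haH : a ∈ H) (ha1H : a + 1 ∈ H)
    (q : ℕ) (hq : 0 < q) (hqa : q < a)
    (s : ℕ) (hs : s ∈ H) (hs0 : 0 < s) (hsq : a * q ≤ s)
    (𝔪 : Ideal (ssr k H)) (h𝔪 : 𝔪 = Ideal.span {tp k H a haH, tp k H (a + 1) ha1H})
    (Q : Ideal (ssr k H)) (hQ : Q = Ideal.span {tp k H s hs})
    (I : Ideal (ssr k H)) (hI : I = Submodule.colon Q ((𝔪 ^ q : Ideal (ssr k H)) : Set (ssr k H))) :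
    I ^ 2 = Q * I := by
  have memH : ∀ n : ℕ, n ∈ H ↔ gH a n := fun n => by rw [hH]; exact closure_mem_iff a n
  have hqa' : q * a ≤ s := by rw [mul_comm]; exact hsq
  -- the support set of I
  set E : ℕ → Prop := fun n => n ∈ H ∧ s ≤ n + q * a ∧ ∀ j ≤ q, gH a (n + q * a - s + j)
    with hE
  -- membership in Q from support conditions
  have memQ : ∀ f : ssr k H, (∀ n, coeff n f.1 ≠ 0 → s ≤ n ∧ (n - s) ∈ H) → f ∈ Q := by
    intro f hf
    rw [hQ, Ideal.mem_span_singleton]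
    refine ⟨⟨PowerSeries.mk fun n => coeff (n + s) f.1, ?_⟩, ?_⟩
    · intro n hn
      rw [coeff_mk]
      by_contra h0
      have h1 := (hf _ h0).2
      rw [Nat.add_sub_cancel] at h1
      exact hn h1
    · exact Subtype.ext
        ((eq_shift_mul_X_pow f.1 s (fun n hn => (hf n hn).1)).trans (mul_comm _ _))
  -- membership in I from support conditions
  have memI : ∀ f : ssr k H, (∀ n, coeff n f.1 ≠ 0 → E n) → f ∈ I := by
    intro f hf
    rw [hI, Submodule.mem_colon]
    intro p hp
    rw [smul_eq_mul]
    apply memQ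
    intro n hn
    have hn' : coeff n (f.1 * p.1) ≠ 0 := hn
    obtain ⟨i, j, rfl, hi, hj⟩ := coeff_mul_ne_zero hn'
    obtain ⟨j₂, h, hj₂, hh, rfl⟩ := supp_m_pow haH ha1H h𝔪 q p hp j hj
    obtain ⟨hiH, his, hrun⟩ := hf i hi
    have e1 : i + (q * a + j₂ + h) - s = (i + q * a - s + j₂) + h := by omega
    refine ⟨by omega, ?_⟩
    rw [e1, memH]
    exact gH_add (hrun j₂ hj₂) ((memH h).mp hh)
  -- support conditions from membership in I
  have suppI : ∀ x ∈ I, ∀ n, coeff n (x : ssr k H).1 ≠ 0 → E n := by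
    intro x hx n hn
    have key : ∀ j ≤ q, s ≤ n + q * a + j ∧ (n + q * a + j - s) ∈ H := by
      intro j hj
      have h1 : tp k H a haH ∈ Ideal.span {tp k H a haH, tp k H (a + 1) ha1H} :=
        Ideal.subset_span (Set.mem_insert _ _)
      have h2 : tp k H (a + 1) ha1H ∈ Ideal.span {tp k H a haH, tp k H (a + 1) ha1H} :=
        Ideal.subset_span (Set.mem_insert_of_mem _ rfl)
      have hμ : tp k H a haH ^ (q - j) * tp k H (a + 1) ha1H ^ j ∈ 𝔪 ^ q := by
        rw [h𝔪]
        have := Ideal.mul_mem_mul (Ideal.pow_mem_pow h1 (q - j)) (Ideal.pow_mem_pow h2 j)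
        rwa [← pow_add, Nat.sub_add_cancel hj] at this
      have hxμ : x * (tp k H a haH ^ (q - j) * tp k H (a + 1) ha1H ^ j) ∈ Q := by
        rw [hI, Submodule.mem_colon] at hx
        have := hx _ hμ
        rwa [smul_eq_mul] at this
      rw [hQ, Ideal.mem_span_singleton] at hxμ
      obtain ⟨c, hc⟩ := hxμ
      have hexp : a * (q - j) + (a + 1) * j = q * a + j := by
        obtain ⟨d, rfl⟩ : ∃ d, q = j + d := ⟨q - j, by omega⟩
        rw [Nat.add_sub_cancel_left]
        ring
      have hc' : x.1 * (X : PowerSeries k) ^ (q * a + j) = c.1 * (X : PowerSeries k) ^ s := by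
        have := congrArg Subtype.val hc
        simp only [MulMemClass.coe_mul, SubmonoidClass.coe_pow] at this
        have e1 : (tp k H a haH : PowerSeries k) = X ^ a := rfl
        have e2 : (tp k H (a + 1) ha1H : PowerSeries k) = X ^ (a + 1) := rfl
        have e3 : (tp k H s hs : PowerSeries k) = X ^ s := rfl
        rw [e1, e2, e3] at this
        rw [← pow_mul, ← pow_mul, ← pow_add, hexp] at this
        rw [this]
        ring
      have h3 : coeff (n + (q * a + j)) (x.1 * (X : PowerSeries k) ^ (q * a + j))
          = coeff n x.1 := PowerSeries.coeff_mul_X_pow _ _ _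
      rw [hc', PowerSeries.coeff_mul_X_pow'] at h3
      split_ifs at h3 with hle
      · refine ⟨by omega, ?_⟩
        have : n + (q * a + j) - s ∈ H := by
          by_contra hcon
          rw [c.2 _ hcon] at h3
          exact hn h3.symm
        convert this using 2
        omega
      · exact absurd h3.symm hn
    obtain ⟨h0s, h0H⟩ := key 0 (Nat.zero_le _)
    refine ⟨ssr_coeff x hn, by omega, ?_⟩
    intro j hj
    obtain ⟨hjs, hjH⟩ := key j hj
    have : n + q * a - s + j = n + q * a + j - s := by omega
    rw [this]
    exact (memH _).mp hjH
  -- easy inclusion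
  have hQI : Q ≤ I := by
    have hts : tp k H s hs ∈ I := by
      rw [hI, Submodule.mem_colon]
      intro p hp
      rw [smul_eq_mul, hQ]
      exact Ideal.mul_mem_right _ _ (Ideal.subset_span rfl)
    rw [hQ, Ideal.span_le]
    simpa using hts
  refine le_antisymm ?_ (by rw [sq]; exact Ideal.mul_mono hQI le_rfl)
  rw [sq, Ideal.mul_le]
  intro x hx y hy
  have hsx := suppI x hx
  have hsy := suppI y hy
  -- the support of x*y lands in s + E
  have hsupp : ∀ n, coeff n (x.1 * y.1) ≠ 0 → s ≤ n ∧ E (n - s) := by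
    intro n hn
    obtain ⟨i, j, rfl, hi, hj⟩ := coeff_mul_ne_zero hn
    obtain ⟨hiH, his, hruni⟩ := hsx i hi
    obtain ⟨hjH, hjs, hrunj⟩ := hsy j hj
    have gi : q * a ≤ i + q * a - s := run_ge ha hqa hruni
    have gj : q * a ≤ j + q * a - s := run_ge ha hqa hrunj
    have hsi : s ≤ i := by omega
    have hsj : s ≤ j := by omega
    refine ⟨by omega, ?_, by omega, ?_⟩
    · rw [memH]
      have h1 := run_addc ha hqa (run_add ha hqa hruni hrunj) ((memH s).mp hs) hqa'
      have e : (i + q * a - s) + (j + q * a - s) - q * a + (s - q * a) = i + j - s := by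
        omega
      rwa [e] at h1
    · intro j' hj'
      have e : i + j - s + q * a - s + j' = (i + q * a - s) + (j + q * a - s) - q * a + j' := by
        omega
      rw [e]
      exact run_add ha hqa hruni hrunj j' hj'
  -- build the quotient z
  have hzmem : (PowerSeries.mk fun n => coeff (n + s) (x.1 * y.1)) ∈ ssr k H := by
    intro n hn
    rw [coeff_mk]
    by_contra h0
    have h1 := (hsupp _ h0).2
    rw [Nat.add_sub_cancel] at h1
    exact hn h1.1
  set z : ssr k H := ⟨PowerSeries.mk fun n => coeff (n + s) (x.1 * y.1), hzmem⟩ with hz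
  have hzI : z ∈ I := by
    apply memI
    intro n hn
    rw [hz] at hn
    have hn' : coeff (n + s) (x.1 * y.1) ≠ 0 := by
      rwa [coeff_mk] at hn
    have h1 := (hsupp _ hn').2
    rwa [Nat.add_sub_cancel] at h1
  have heq : x * y = tp k H s hs * z :=
    Subtype.ext
      ((eq_shift_mul_X_pow (x.1 * y.1) s (fun n hn => (hsupp n hn).1)).trans (mul_comm _ _))
  rw [heq]
  exact Ideal.mul_mem_mul (hQ ▸ Ideal.subset_span rfl) hzI
end

section
/- Let A = k[[t^a, t^{a+1}]] with a ≥ 2, q = a−1, and s = (a+1)ℓ with 1 ≤ ℓ < a−1 (the case r = ℓ). Set Q = (t^s), I = Q : 𝔪^{a−1}. Then for each n ≥ 1, I^n = QI^{n−1} if and only if n − 1 ≥ ⌈(a−1)/(ℓ+1)⌉; consequently the reduction number r_Q(I) = min{n ≥ 0 : I^{n+1} = QI^n} equals ⌈(a−1)/(ℓ+1)⌉. Moreover Q ∩ I^n = QI^{n−1} for all n ≥ 1, so G(I) is Cohen–Macaulay. -/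
set_option maxHeartbeats 1000000
set_option synthInstance.maxHeartbeats 1000000

open PowerSeries Pointwise

namespace Stmt16Aux

/-- The monomial ideal with generator exponents `G`. -/
noncomputable def MI (k : Type) [Field k] (H : AddSubmonoid ℕ) (G : Set ℕ) : Ideal (ssr k H) :=
  Ideal.span {x : ssr k H | ∃ g ∈ G, (x : PowerSeries k) = PowerSeries.X ^ g}

variable {k : Type} [Field k] {H : AddSubmonoid ℕ}

lemma coe_tp (n : ℕ) (hn : n ∈ H) :
    ((tp k H n hn : ssr k H) : PowerSeries k) = PowerSeries.X ^ n := rfl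

lemma ssr_coeff_eq_zero (f : ssr k H) {n : ℕ} (hn : n ∉ H) :
    PowerSeries.coeff n (f : PowerSeries k) = 0 :=
    (f.2 : ∀ n : ℕ, n ∉ H → PowerSeries.coeff n (f : PowerSeries k) = 0) n hn

lemma mem_H_of_coe_eq_X_pow (x : ssr k H) (g : ℕ)
    (hx : (x : PowerSeries k) = PowerSeries.X ^ g) : g ∈ H := by
  by_contra h
  have h2 := (x.2 : ∀ n : ℕ, n ∉ H → PowerSeries.coeff n (x : PowerSeries k) = 0) g h
  rw [hx, PowerSeries.coeff_X_pow, if_pos rfl] at h2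
  exact one_ne_zero h2

lemma tp_mul (m n : ℕ) (hm : m ∈ H) (hn : n ∈ H) :
    tp k H m hm * tp k H n hn = tp k H (m + n) (H.add_mem hm hn) := by
  apply Subtype.ext
  show (PowerSeries.X ^ m) * (PowerSeries.X ^ n) = PowerSeries.X ^ (m + n)
  rw [pow_add]

lemma tp_mem_MI {G : Set ℕ} {g : ℕ} (hg : g ∈ G) (hgH : g ∈ H) :
    tp k H g hgH ∈ MI k H G :=
  Ideal.subset_span ⟨g, hg, rfl⟩

lemma tp_add_mem_MI {G : Set ℕ} {g h : ℕ} (hg : g ∈ G) (hgH : g ∈ H) (hh : h ∈ H) :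
    tp k H (g + h) (H.add_mem hgH hh) ∈ MI k H G := by
  rw [← tp_mul g h hgH hh]
  exact Ideal.mul_mem_right _ _ (tp_mem_MI hg hgH)

lemma MI_le_MI {G1 G2 : Set ℕ} (hG2 : ∀ g ∈ G2, g ∈ H)
    (hle : ∀ g ∈ G1, ∃ g2 ∈ G2, ∃ h ∈ H, g = g2 + h) : MI k H G1 ≤ MI k H G2 := by
  rw [MI, Ideal.span_le]
  rintro x ⟨g, hg, hx⟩
  obtain ⟨g2, hg2, h, hh, rfl⟩ := hle g hg
  have hx' : x = tp k H (g2 + h) (H.add_mem (hG2 g2 hg2) hh) := Subtype.ext hx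
  rw [hx']
  exact tp_add_mem_MI hg2 (hG2 g2 hg2) hh

lemma MI_mul_MI {G1 G2 : Set ℕ} (hG1 : ∀ g ∈ G1, g ∈ H) (hG2 : ∀ g ∈ G2, g ∈ H) :
    MI k H G1 * MI k H G2 = MI k H (G1 + G2) := by
  apply le_antisymm
  · rw [MI, MI, Ideal.span_mul_span']
    apply Ideal.span_le.2
    rintro z ⟨x, ⟨g1, hg1, hx⟩, y, ⟨g2, hg2, hy⟩, rfl⟩
    refine Ideal.subset_span ⟨g1 + g2, Set.add_mem_add hg1 hg2, ?_⟩
    show (x : PowerSeries k) * (y : PowerSeries k) = _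
    rw [hx, hy, pow_add]
  · rw [MI, Ideal.span_le]
    rintro z ⟨g, hgmem, hz⟩
    rw [Set.mem_add] at hgmem
    obtain ⟨g1, hg1, g2, hg2, rfl⟩ := hgmem
    have hz' : z = tp k H g1 (hG1 g1 hg1) * tp k H g2 (hG2 g2 hg2) := by
      apply Subtype.ext
      rw [hz]
      show _ = (PowerSeries.X : PowerSeries k) ^ g1 * PowerSeries.X ^ g2
      rw [pow_add]
    rw [hz']
    exact Ideal.mul_mem_mul (tp_mem_MI hg1 (hG1 g1 hg1)) (tp_mem_MI hg2 (hG2 g2 hg2))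

lemma MI_add_MI (G1 G2 : Set ℕ) :
    MI k H G1 + MI k H G2 = MI k H (G1 ∪ G2) := by
  rw [MI, MI, MI, Submodule.add_eq_sup, ← Ideal.span_union]
  congr 1
  ext x
  constructor
  · rintro (⟨g, hg, hx⟩ | ⟨g, hg, hx⟩)
    exacts [⟨g, Or.inl hg, hx⟩, ⟨g, Or.inr hg, hx⟩]
  · rintro ⟨g, hg | hg, hx⟩
    exacts [Or.inl ⟨g, hg, hx⟩, Or.inr ⟨g, hg, hx⟩]

lemma MI_top : MI k H {0} = ⊤ := by
  rw [eq_top_iff]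
  intro x _
  have h1 : (1 : ssr k H) ∈ MI k H {0} :=
    Ideal.subset_span ⟨0, rfl, by rw [pow_zero]; rfl⟩
  simpa using Ideal.mul_mem_left _ x h1

lemma coeff_ne_zero_mem {f : ssr k H} {n : ℕ}
    (h : PowerSeries.coeff n (f : PowerSeries k) ≠ 0) : n ∈ H := by
  by_contra hc; exact h ((f.2 : ∀ n : ℕ, n ∉ H → PowerSeries.coeff n (f : PowerSeries k) = 0) n hc)

lemma mem_MI_of_bounded_supp {G : Set ℕ} (hG : ∀ g ∈ G, g ∈ H) (B : ℕ) :
    ∀ x : ssr k H, (∀ m, B ≤ m → PowerSeries.coeff m (x : PowerSeries k) = 0) →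
    (∀ n : ℕ, PowerSeries.coeff n (x : PowerSeries k) ≠ 0 →
      ∃ g ∈ G, ∃ h ∈ H, n = g + h) → x ∈ MI k H G := by
  induction B with
  | zero =>
    intro x hbd _
    have : x = 0 := Subtype.ext (PowerSeries.ext fun n => by
      rw [hbd n (Nat.zero_le n)]; simp)
    rw [this]; exact Ideal.zero_mem _
  | succ B ih =>
    intro x hbd hsupp
    by_cases hB : PowerSeries.coeff B (x : PowerSeries k) = 0
    · exact ih x (fun m hm => by
        rcases Nat.lt_or_ge m (B+1) with h | h
        · have : m = B := by omega
          rw [this]; exact hB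
        · exact hbd m h) hsupp
    · obtain ⟨g, hg, h, hh, hBeq⟩ := hsupp B hB
      have hBH : B ∈ H := hBeq ▸ H.add_mem (hG g hg) hh
      set cB := PowerSeries.coeff B (x : PowerSeries k) with hcB
      set y := x - cB • tp k H B hBH with hy
      have hyval : (y : PowerSeries k)
          = (x : PowerSeries k) - cB • (PowerSeries.X ^ B) := rfl
      have hycoeff : ∀ m, PowerSeries.coeff m (y : PowerSeries k)
          = if m = B then 0 else PowerSeries.coeff m (x : PowerSeries k) := by
        intro m
        rw [hyval, map_sub, map_smul, PowerSeries.coeff_X_pow]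
        split_ifs with hmB
        · subst hmB; simp [hcB]
        · simp
      have hymem : y ∈ MI k H G := by
        apply ih y
        · intro m hm
          rw [hycoeff]
          split_ifs with hmB
          · rfl
          · exact hbd m (by omega)
        · intro n hn
          rw [hycoeff] at hn
          split_ifs at hn with hnB
          · exact absurd rfl hn
          · exact hsupp n hn
      have hxy : x = y + cB • tp k H B hBH := by rw [hy]; ring
      rw [hxy]
      refine Ideal.add_mem _ hymem ?_
      have hsm : cB • tp k H B hBH
          = (algebraMap k (ssr k H) cB) * tp k H B hBH := Algebra.smul_def cB _
      rw [hsm]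
      apply Ideal.mul_mem_left
      have : tp k H B hBH = tp k H (g + h) (H.add_mem (hG g hg) hh) := by
        apply Subtype.ext; rw [coe_tp, coe_tp, hBeq]
      rw [this]
      exact tp_add_mem_MI hg (hG g hg) hh

lemma mem_MI_iff {G : Set ℕ} (hG : ∀ g ∈ G, g ∈ H)
    (c : ℕ) (hc : ∀ x, c ≤ x → x ∈ H) (f : ssr k H) :
    f ∈ MI k H G ↔
      ∀ n : ℕ, PowerSeries.coeff n (f : PowerSeries k) ≠ 0 →
        ∃ g ∈ G, ∃ h ∈ H, n = g + h := by
  constructor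
  · intro hf
    induction hf using Submodule.span_induction with
    | mem x hx =>
      obtain ⟨g, hg, hx⟩ := hx
      intro n hn
      rw [hx, PowerSeries.coeff_X_pow] at hn
      have hng : n = g := by
        by_contra hne
        rw [if_neg hne] at hn
        exact hn rfl
      exact ⟨g, hg, 0, H.zero_mem, by omega⟩
    | zero =>
      intro n hn
      simp at hn
    | add x y hx hy ihx ihy =>
      intro n hn
      have hco : (((x + y : ssr k H)) : PowerSeries k)
          = (x : PowerSeries k) + (y : PowerSeries k) := rfl
      rw [hco, map_add] at hn
      rcases Classical.em (PowerSeries.coeff n (x : PowerSeries k) = 0) with h0 | h0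
      · exact ihy n (by intro hy0; rw [h0, hy0] at hn; exact hn (add_zero 0))
      · exact ihx n h0
    | smul r x hx ih =>
      intro n hn
      have hco : (((r • x : ssr k H)) : PowerSeries k)
          = (r : PowerSeries k) * (x : PowerSeries k) := rfl
      rw [hco, PowerSeries.coeff_mul] at hn
      obtain ⟨⟨i, j⟩, hij, hne⟩ := Finset.exists_ne_zero_of_sum_ne_zero hn
      replace hij : i + j = n := by simpa using hij
      have hi : i ∈ H := coeff_ne_zero_mem (left_ne_zero_of_mul hne)
      obtain ⟨g, hg, h, hh, rfl⟩ := ih j (right_ne_zero_of_mul hne)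
      exact ⟨g, hg, h + i, H.add_mem hh hi, by omega⟩
  · intro hsupp
    by_cases hzero : f = 0
    · rw [hzero]; exact Ideal.zero_mem _
    have hex : ∃ n, PowerSeries.coeff n (f : PowerSeries k) ≠ 0 := by
      by_contra hno
      push_neg at hno
      exact hzero (Subtype.ext (PowerSeries.ext fun n => by rw [hno n]; simp))
    obtain ⟨n₀, hn₀⟩ := hex
    obtain ⟨g₀, hg₀, h₀, hh₀, hn₀eq⟩ := hsupp n₀ hn₀
    set M := g₀ + c with hM
    set B := M + c with hB
    set tail : PowerSeries k := PowerSeries.mk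
      (fun i => if c ≤ i then PowerSeries.coeff (M + i) (f : PowerSeries k) else 0)
      with htail
    have hu : PowerSeries.X ^ c * tail ∈ ssr k H := by
      intro m hm
      rw [PowerSeries.coeff_X_pow_mul', htail]
      split_ifs with hcm
      · rw [PowerSeries.coeff_mk]
        refine if_neg (fun hcm2 => hm (hc m ?_))
        omega
      · rfl
    set u : ssr k H := ⟨PowerSeries.X ^ c * tail, hu⟩ with hudef
    set fhi : ssr k H := u * tp k H g₀ (hG g₀ hg₀) with hfhi
    have hfhival : (fhi : PowerSeries k) = PowerSeries.X ^ M * tail := by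
      show (PowerSeries.X ^ c * tail) * PowerSeries.X ^ g₀ = _
      rw [hM, pow_add]
      ring
    have hhicoeff : ∀ m, PowerSeries.coeff m (fhi : PowerSeries k)
        = if B ≤ m then PowerSeries.coeff m (f : PowerSeries k) else 0 := by
      intro m
      rw [hfhival, PowerSeries.coeff_X_pow_mul', htail]
      split_ifs with h1 h2 h2
      · rw [PowerSeries.coeff_mk, if_pos (by omega), Nat.add_sub_cancel' h1]
      · rw [PowerSeries.coeff_mk, if_neg (by omega)]
      · omega
      · rfl
    have hfhimem : fhi ∈ MI k H G := by
      rw [hfhi]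
      exact Ideal.mul_mem_left _ u (tp_mem_MI hg₀ (hG g₀ hg₀))
    set flo := f - fhi with hflo
    have hlocoeff : ∀ m, PowerSeries.coeff m (flo : PowerSeries k)
        = if B ≤ m then 0 else PowerSeries.coeff m (f : PowerSeries k) := by
      intro m
      have : (flo : PowerSeries k) = (f : PowerSeries k) - (fhi : PowerSeries k) := rfl
      rw [this, map_sub, hhicoeff]
      split_ifs with h1
      · exact sub_self _
      · exact sub_zero _
    have hlomem : flo ∈ MI k H G := by
      apply mem_MI_of_bounded_supp hG B
      · intro m hm
        rw [hlocoeff, if_pos hm]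
      · intro n hn
        rw [hlocoeff] at hn
        split_ifs at hn with h1
        · exact absurd rfl hn
        · exact hsupp n hn
    have : f = flo + fhi := by rw [hflo]; ring
    rw [this]
    exact Ideal.add_mem _ hlomem hfhimem


/-! ### Numeric lemmas -/

/-- Membership characterisation for the numerical semigroup `⟨a, a+1⟩`. -/
lemma Hchar {a : ℕ} (ha : 1 ≤ a) (n : ℕ) :
    n ∈ AddSubmonoid.closure ({a, a + 1} : Set ℕ) ↔ n % a ≤ n / a := by
  have key : ∀ y x : ℕ, (x * a + y * (a + 1)) % a ≤ (x * a + y * (a + 1)) / a := by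
    intro y
    induction y using Nat.strong_induction_on with
    | _ y ih =>
      intro x
      rcases Nat.lt_or_ge y a with hy | hy
      · have h1 : x * a + y * (a + 1) = a * (x + y) + y := by ring
        rw [h1, Nat.mul_add_mod, Nat.mul_add_div ha, Nat.mod_eq_of_lt hy,
          Nat.div_eq_of_lt hy]
        omega
      · obtain ⟨y', rfl⟩ : ∃ y', y = y' + a := ⟨y - a, by omega⟩
        have h2 : x * a + (y' + a) * (a + 1) = (x + a + 1) * a + y' * (a + 1) := by ring
        rw [h2]
        exact ih y' (by omega) (x + a + 1)
  constructor
  · intro hn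
    rw [AddSubmonoid.mem_closure_pair] at hn
    obtain ⟨x, y, hxy⟩ := hn
    simp only [smul_eq_mul] at hxy
    rw [← hxy]
    exact key y x
  · intro hn
    rw [AddSubmonoid.mem_closure_pair]
    have hmod := Nat.div_add_mod n a
    obtain ⟨d, hd⟩ : ∃ d, n / a = n % a + d := ⟨n / a - n % a, by omega⟩
    refine ⟨d, n % a, ?_⟩
    simp only [smul_eq_mul]
    have : d * a + n % a * (a + 1) = a * (n % a + d) + n % a := by ring
    rw [this, ← hd, hmod]

lemma divmod_helper {a : ℕ} (ha : 0 < a) {e ρ : ℕ} (hρ : ρ < a) :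
    (a * e + ρ) / a = e ∧ (a * e + ρ) % a = ρ := by
  rw [Nat.mul_add_div ha, Nat.mul_add_mod, Nat.mod_eq_of_lt hρ, Nat.div_eq_of_lt hρ]
  omega

/-- Conductor bound: everything at least `a*(a-1)` lies in the semigroup. -/
lemma cond_helper {a x : ℕ} (ha : 0 < a) (h : a * a ≤ x + a) : x % a ≤ x / a := by
  have h1 : (a - 1) * a ≤ x := by
    have h2 : (a - 1) * a = a * a - a := by rw [Nat.sub_mul, one_mul, Nat.mul_comm]
    omega
  have h2 : a - 1 ≤ x / a := (Nat.le_div_iff_mul_le ha).2 h1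
  have h3 : x % a < a := Nat.mod_lt _ ha
  omega

/-- decomposition of elements of the semigroup with `x / a ≥ N`. -/
lemma decomp_helper {a x N : ℕ} (ha : 0 < a) (hP : x % a ≤ x / a) (hN : N ≤ x / a) :
    ∃ J, J ≤ N ∧ ∃ h, h % a ≤ h / a ∧ x = N * a + J + h := by
  have hmod := Nat.div_add_mod x a
  have hrlt : x % a < a := Nat.mod_lt _ ha
  obtain ⟨e, he⟩ : ∃ e, x / a = N + e := ⟨x / a - N, by omega⟩
  rw [he] at hmod
  have hid : a * (N + e) = N * a + a * e := by ring
  rcases le_or_gt (x % a) N with hrN | hrN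
  · refine ⟨x % a, hrN, a * e, ?_, by omega⟩
    rw [Nat.mul_mod_right]
    exact Nat.zero_le _
  · have hrNlt : x % a - N < a := by omega
    obtain ⟨hd, hm⟩ := divmod_helper ha hrNlt (e := e)
    refine ⟨N, le_refl N, a * e + (x % a - N), ?_, by omega⟩
    rw [hd, hm]
    omega

/-! ### Generator sets -/

def SumN (a N : ℕ) : Set ℕ := {x | ∃ J, J ≤ N ∧ x = N * a + J}

def Gn (a ℓ s : ℕ) : Set ℕ := {s} ∪ SumN a (ℓ + 1)

def Sg (a ℓ s n : ℕ) : Set ℕ :=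
  {x | ∃ c d J, c + d = n ∧ J ≤ d * (ℓ + 1) ∧ x = c * s + d * ((ℓ + 1) * a) + J}

lemma SumN_zero (a : ℕ) : SumN a 0 = {0} := by
  ext x
  simp [SumN, Nat.le_zero]

lemma SumN_add_pair (a N : ℕ) : SumN a N + {a, a + 1} = SumN a (N + 1) := by
  ext x
  constructor
  · rintro ⟨y, ⟨J, hJ, rfl⟩, z, hz, rfl⟩
    rcases hz with rfl | rfl
    · exact ⟨J, by omega, by ring⟩
    · exact ⟨J + 1, by omega, by ring⟩
  · rintro ⟨J, hJ, rfl⟩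
    rcases le_or_gt J N with h | h
    · exact ⟨N * a + J, ⟨J, h, rfl⟩, a, Or.inl rfl, by ring⟩
    · have hJN : J = N + 1 := by omega
      exact ⟨N * a + N, ⟨N, le_refl N, rfl⟩, a + 1, Or.inr rfl, by rw [hJN]; ring⟩

lemma Sg_zero (a ℓ s : ℕ) : Sg a ℓ s 0 = {0} := by
  ext x
  constructor
  · rintro ⟨c, d, J, hcd, hJ, rfl⟩
    have hc : c = 0 := by omega
    have hd : d = 0 := by omega
    subst hc; subst hd
    simp at hJ ⊢
    omega
  · rintro rfl
    exact ⟨0, 0, 0, rfl, by simp, by ring⟩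

lemma Sg_succ (a ℓ s n : ℕ) : Sg a ℓ s n + Gn a ℓ s = Sg a ℓ s (n + 1) := by
  ext x
  constructor
  · rintro ⟨y, ⟨c, d, J, hcd, hJ, rfl⟩, z, hz, rfl⟩
    rcases hz with rfl | ⟨j, hj, rfl⟩
    · exact ⟨c + 1, d, J, by omega, hJ, by ring⟩
    · refine ⟨c, d + 1, J + j, by omega, by
        have : (d + 1) * (ℓ + 1) = d * (ℓ + 1) + (ℓ + 1) := by ring
        omega, by ring⟩
  · rintro ⟨c, d, J, hcd, hJ, rfl⟩
    rcases Nat.eq_zero_or_pos c with rfl | hc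
    · have hd : d = n + 1 := by omega
      subst hd
      obtain ⟨w, hw⟩ : ∃ w, n * (ℓ + 1) = w := ⟨_, rfl⟩
      have hJ' : J ≤ w + (ℓ + 1) := by
        have : (n + 1) * (ℓ + 1) = w + (ℓ + 1) := by rw [← hw]; ring
        omega
      obtain ⟨J1, J2, hJ1, hJ2, hJsplit⟩ :
          ∃ J1 J2, J1 ≤ w ∧ J2 ≤ ℓ + 1 ∧ J = J1 + J2 :=
        ⟨min J w, J - min J w, by omega, by omega, by omega⟩
      refine ⟨0 * s + n * ((ℓ + 1) * a) + J1,
        ⟨0, n, J1, by omega, by rw [hw]; omega, rfl⟩,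
        (ℓ + 1) * a + J2, Or.inr ⟨J2, hJ2, rfl⟩, ?_⟩
      show 0 * s + n * ((ℓ + 1) * a) + J1 + ((ℓ + 1) * a + J2) = 0 * s + (n + 1) * ((ℓ + 1) * a) + J
      have h2 : (n + 1) * ((ℓ + 1) * a) = n * ((ℓ + 1) * a) + (ℓ + 1) * a := by ring
      omega
    · obtain ⟨c', rfl⟩ : ∃ c', c = c' + 1 := ⟨c - 1, by omega⟩
      exact ⟨c' * s + d * ((ℓ + 1) * a) + J, ⟨c', d, J, by omega, hJ, rfl⟩,
        s, Or.inl rfl, by ring⟩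


/-- Core contradiction: for `n(ℓ+1) ≤ a-2` the monomial `(n+1)(ℓ+1)a + (ℓ-1)`
is not in `Q·I^n`. -/
lemma witness_lemma {a ℓ c d J h : ℕ} (ha : 2 ≤ a) (hℓ1 : 1 ≤ ℓ)
    (hn : (c + d) * (ℓ + 1) + 2 ≤ a) (hJ : J ≤ d * (ℓ + 1))
    (heq : (c + d + 1) * (ℓ + 1) * a + (ℓ - 1)
      = (ℓ * a + ℓ) + (c * (ℓ * a + ℓ) + d * ((ℓ + 1) * a) + J) + h)
    (hP : h % a ≤ h / a) : False := by
  have ha0 : 0 < a := by omega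
  have id1 : (c + d + 1) * (ℓ + 1) * a
      = (c + 1) * (ℓ * a) + (c + 1) * a + d * ((ℓ + 1) * a) := by ring
  have id2 : c * (ℓ * a + ℓ) + (ℓ * a + ℓ) = (c + 1) * (ℓ * a) + (c + 1) * ℓ := by ring
  have id3 : (c + 1) * ℓ + d * (ℓ + 1) + c = (c + d) * (ℓ + 1) + ℓ := by ring
  have id4 : (c + 1) * a = a * c + a := by ring
  have hX5 : ℓ ≤ (c + 1) * ℓ := Nat.le_mul_of_pos_left ℓ (by omega)
  have hlow : a * c + c + 1 ≤ h := by omega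
  have hhigh : h + 1 ≤ a * c + a := by omega
  obtain ⟨ρ, hρ⟩ : ∃ ρ, h = a * c + ρ := ⟨h - a * c, by omega⟩
  have hρlt : ρ < a := by omega
  obtain ⟨hdv, hmd⟩ := divmod_helper ha0 hρlt (e := c)
  rw [hρ, hdv, hmd] at hP
  omega

/-- Core step for `Q ∩ I^{n+1} = Q I^n`. -/
lemma inter_lemma {a ℓ n x h₀ c d J h : ℕ} (ha0 : 0 < a) (hℓa : ℓ + 1 < a)
    (hx1 : x = (ℓ * a + ℓ) + h₀) (hP0 : h₀ % a ≤ h₀ / a)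
    (hcd : c + d = n + 1) (hJ : J ≤ d * (ℓ + 1))
    (hx2 : x = (c * (ℓ * a + ℓ) + d * ((ℓ + 1) * a) + J) + h) (hPh : h % a ≤ h / a) :
    ∃ c' d' J', c' + d' = n ∧ J' ≤ d' * (ℓ + 1) ∧ ∃ h', h' % a ≤ h' / a ∧
      x = (ℓ * a + ℓ) + (c' * (ℓ * a + ℓ) + d' * ((ℓ + 1) * a) + J') + h' := by
  rcases Nat.eq_zero_or_pos c with rfl | hc
  · have hd : d = n + 1 := by omega
    subst hd
    have id1 : (n + 1) * ((ℓ + 1) * a) = (n * (ℓ + 1)) * a + ℓ * a + a := by ring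
    have hlow : (n * (ℓ + 1)) * a + 1 ≤ h₀ := by omega
    have hN : n * (ℓ + 1) ≤ h₀ / a := by
      rw [Nat.le_div_iff_mul_le ha0]
      omega
    obtain ⟨J', hJ', h', hPh', hdec⟩ := decomp_helper ha0 hP0 hN
    refine ⟨0, n, J', by omega, by omega, h', hPh', ?_⟩
    have id2 : n * ((ℓ + 1) * a) = (n * (ℓ + 1)) * a := by ring
    omega
  · obtain ⟨c', rfl⟩ : ∃ c', c = c' + 1 := ⟨c - 1, by omega⟩
    refine ⟨c', d, J, by omega, hJ, h, hPh, ?_⟩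
    have id1 : (c' + 1) * (ℓ * a + ℓ) = c' * (ℓ * a + ℓ) + (ℓ * a + ℓ) := by ring
    omega

/-- Core computation for the colon ideal `I = Q : 𝔪^{a-1}`. -/
lemma colon_char {a ℓ m : ℕ} (ha : 2 ≤ a) (hℓ1 : 1 ≤ ℓ) (hℓa : ℓ + 2 ≤ a)
    (hm : m % a ≤ m / a)
    (hsub : ∀ j, j ≤ a - 1 → ∃ h, h % a ≤ h / a ∧
      m + ((a - 1) * a + j) = (ℓ * a + ℓ) + h) :
    m = ℓ * a + ℓ ∨ ℓ + 1 ≤ m / a := by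
  have ha0 : 0 < a := by omega
  have hmeq := Nat.div_add_mod m a
  have hrlt : m % a < a := Nat.mod_lt _ ha0
  rcases le_or_gt (ℓ + 1) (m / a) with hq | hq
  · exact Or.inr hq
  -- q ≤ ℓ
  rcases le_or_gt ℓ (m % a) with hr | hr
  · -- r = ℓ, q = ℓ
    left
    have h1 : m % a = ℓ := by omega
    have h2 : m / a = ℓ := by omega
    have id8 : a * ℓ = ℓ * a := by ring
    rw [h1, h2] at hmeq
    omega
  · -- r ≤ ℓ - 1 : contradiction
    exfalso
    obtain ⟨h, hPh, heq⟩ := hsub (ℓ - m % a - 1) (by omega)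
    obtain ⟨e, he⟩ : ∃ e, m / a + a = ℓ + 2 + e := ⟨m / a + a - ℓ - 2, by omega⟩
    have id5 : (a - 1) * a + a = a * a := by
      have h2 : a - 1 + 1 = a := by omega
      calc (a - 1) * a + a = (a - 1 + 1) * a := by ring
      _ = a * a := by rw [h2]
    have id6 : a * (m / a + a) = a * ℓ + 2 * a + a * e := by rw [he]; ring
    have id7 : a * (m / a + a) = a * (m / a) + a * a := by ring
    have id8 : a * ℓ = ℓ * a := by ring
    have hheq : h = a * e + (a - 1) := by omega
    obtain ⟨hdv, hmd⟩ := divmod_helper ha0 (show a - 1 < a by omega) (e := e)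
    rw [hheq, hdv, hmd] at hPh
    omega

/-- Easy direction decomposition: if `a - 1 ≤ n(ℓ+1)` then each pure-`𝔪` generator
of `I^{n+1}` lies in `Q·I^n`. -/
lemma easy_lemma {a ℓ n J : ℕ} (ha : 2 ≤ a) (hℓa : ℓ + 2 ≤ a) (hra : a ≤ n * (ℓ + 1) + 1)
    (hJ : J ≤ (n + 1) * (ℓ + 1)) :
    ∃ J', J' ≤ n * (ℓ + 1) ∧ ∃ h, h % a ≤ h / a ∧
      (n + 1) * ((ℓ + 1) * a) + J
        = (ℓ * a + ℓ) + (0 * (ℓ * a + ℓ) + n * ((ℓ + 1) * a) + J') + h := by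
  have ha0 : 0 < a := by omega
  have id1 : (n + 1) * ((ℓ + 1) * a) = n * ((ℓ + 1) * a) + ℓ * a + a := by ring
  have id2 : (n + 1) * (ℓ + 1) = n * (ℓ + 1) + ℓ + 1 := by ring
  rcases lt_or_ge J ℓ with hc1 | hc1
  · exact ⟨a + J - ℓ, by omega, 0, by simp, by omega⟩
  rcases le_or_gt J (n * (ℓ + 1) + ℓ) with hc2 | hc2
  · refine ⟨J - ℓ, by omega, a, ?_, by omega⟩
    rw [Nat.mod_self]
    exact Nat.zero_le _
  · obtain ⟨hdv, hmd⟩ := divmod_helper ha0 (show 1 < a by omega) (e := 1)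
    refine ⟨n * (ℓ + 1), le_refl _, a + 1, ?_, by omega⟩
    have : a + 1 = a * 1 + 1 := by ring
    rw [this, hdv, hmd]

end Stmt16Aux

open Stmt16Aux

/-- Corollary 3.6 (2): for `q = a-1` and `s = (a+1)ℓ` (`1 ≤ ℓ < a-1`):
`I^{n+1} = QI^n` iff `n ≥ ⌈(a-1)/(ℓ+1)⌉`, so `r_Q(I) = ⌈(a-1)/(ℓ+1)⌉`; moreover
`Q ∩ I^{n+1} = QI^n` for all `n`, so `G(I)` is Cohen-Macaulay.
(Note `⌈(a-1)/(ℓ+1)⌉ = (a - 1 + ℓ)/(ℓ + 1)` in natural division.) -/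
theorem stmt16 (k : Type) [Field k] (a : ℕ) (ha : 2 ≤ a)
    (H : AddSubmonoid ℕ) (hH : H = AddSubmonoid.closure {a, a + 1})
    (haH : a ∈ H) (ha1H : a + 1 ∈ H)
    (ℓ : ℕ) (hℓ1 : 1 ≤ ℓ) (hℓ : ℓ < a - 1)
    (s : ℕ) (hsval : s = (a + 1) * ℓ) (hs : s ∈ H)
    (𝔪 : Ideal (ssr k H)) (h𝔪 : 𝔪 = Ideal.span {tp k H a haH, tp k H (a + 1) ha1H})
    (Q : Ideal (ssr k H)) (hQ : Q = Ideal.span {tp k H s hs})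
    (I : Ideal (ssr k H)) (hI : I = Submodule.colon Q ((𝔪 ^ (a - 1) : Ideal (ssr k H)) : Set (ssr k H))) :
    (∀ n : ℕ, I ^ (n + 1) = Q * I ^ n ↔ (a - 1 + ℓ) / (ℓ + 1) ≤ n) ∧
    sInf {n : ℕ | I ^ (n + 1) = Q * I ^ n} = (a - 1 + ℓ) / (ℓ + 1) ∧
    ∀ n : ℕ, Q ⊓ I ^ (n + 1) = Q * I ^ n := by
  classical
  have ha0 : 0 < a := by omega
  have hℓa : ℓ + 2 ≤ a := by omega
  have hsval' : s = ℓ * a + ℓ := by rw [hsval]; ring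
  have hcar : ∀ n : ℕ, n ∈ H ↔ n % a ≤ n / a := by
    intro n; rw [hH]; exact Hchar (by omega) n
  have hrep : ∀ u v : ℕ, u * a + v * (a + 1) ∈ H := by
    intro u v
    have h1 : u • a + v • (a + 1) ∈ H :=
      H.add_mem (nsmul_mem haH u) (nsmul_mem ha1H v)
    simpa [smul_eq_mul] using h1
  have hcnd : ∀ x : ℕ, a * a ≤ x → x ∈ H := fun x hx =>
    (hcar x).2 (cond_helper ha0 (by omega))
  have hcnd' : ∀ x : ℕ, a * a ≤ x + a → x ∈ H := fun x hx =>
    (hcar x).2 (cond_helper ha0 hx)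
  -- generator sets lie in H
  have hSumNH : ∀ N : ℕ, ∀ g ∈ SumN a N, g ∈ H := by
    rintro N g ⟨J, hJ, rfl⟩
    obtain ⟨e, he⟩ : ∃ e, N = J + e := ⟨N - J, by omega⟩
    subst he
    have h1 : (J + e) * a + J = e * a + J * (a + 1) := by ring
    rw [h1]; exact hrep _ _
  have hGnH : ∀ g ∈ Gn a ℓ s, g ∈ H := by
    rintro g (rfl | hg)
    · exact hs
    · exact hSumNH (ℓ + 1) g hg
  have hSgH : ∀ n : ℕ, ∀ g ∈ Sg a ℓ s n, g ∈ H := by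
    rintro n g ⟨c, d, J, hcd, hJ, rfl⟩
    obtain ⟨e, he⟩ : ∃ e, d * (ℓ + 1) = J + e := ⟨d * (ℓ + 1) - J, by omega⟩
    have id1 : d * ((ℓ + 1) * a) = (J + e) * a := by rw [← he]; ring
    have h1 : c * s + d * ((ℓ + 1) * a) + J = e * a + (c * ℓ + J) * (a + 1) := by
      rw [hsval', id1]; ring
    rw [h1]; exact hrep _ _
  have hsingleH : ∀ g ∈ ({s} : Set ℕ), g ∈ H := by
    rintro g rfl; exact hs
  have hQSgH : ∀ n : ℕ, ∀ g ∈ ({s} : Set ℕ) + Sg a ℓ s n, g ∈ H := by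
    intro n g hg
    obtain ⟨y, hy, z, hz, rfl⟩ := Set.mem_add.1 hg
    rcases hy with rfl
    exact H.add_mem hs (hSgH n z hz)
  -- ideals in MI form
  have h𝔪MI : 𝔪 = MI k H ({a, a + 1} : Set ℕ) := by
    rw [h𝔪, MI]
    congr 1
    ext x
    constructor
    · rintro (rfl | rfl)
      exacts [⟨a, Or.inl rfl, rfl⟩, ⟨a + 1, Or.inr rfl, rfl⟩]
    · rintro ⟨g, (rfl | rfl), hx⟩
      exacts [Or.inl (Subtype.ext hx), Or.inr (Subtype.ext hx)]
  have hQMI : Q = MI k H ({s} : Set ℕ) := by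
    rw [hQ, MI]
    congr 1
    ext x
    constructor
    · rintro rfl
      exact ⟨s, rfl, rfl⟩
    · rintro ⟨g, rfl, hx⟩
      exact Subtype.ext hx
  have hpow𝔪 : ∀ N : ℕ, 𝔪 ^ N = MI k H (SumN a N) := by
    intro N
    induction N with
    | zero =>
      rw [pow_zero, SumN_zero, MI_top]
      exact Ideal.one_eq_top
    | succ N ih =>
      rw [pow_succ, ih, h𝔪MI, MI_mul_MI (hSumNH N) (by
        rintro g (rfl | rfl)
        exacts [haH, ha1H]), SumN_add_pair]
  -- the colon ideal
  have hIMI : I = MI k H (Gn a ℓ s) := by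
    apply le_antisymm
    · intro f hf
      rw [hI, Submodule.mem_colon] at hf
      rw [mem_MI_iff hGnH (a * a) hcnd]
      intro m hm
      have hmH : m ∈ H := coeff_ne_zero_mem hm
      have hsub : ∀ j, j ≤ a - 1 → ∃ h, h % a ≤ h / a ∧
          m + ((a - 1) * a + j) = (ℓ * a + ℓ) + h := by
        intro j hj
        have he : (a - 1) * a + j ∈ SumN a (a - 1) := ⟨j, hj, rfl⟩
        have heH : (a - 1) * a + j ∈ H := hSumNH _ _ he
        have htp : tp k H _ heH ∈ 𝔪 ^ (a - 1) := by
          rw [hpow𝔪]; exact tp_mem_MI he heH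
        have hfQ := hf _ htp
        rw [hQMI, mem_MI_iff hsingleH (a * a) hcnd] at hfQ
        have hco : PowerSeries.coeff (m + ((a - 1) * a + j))
            ((f • tp k H _ heH : ssr k H) : PowerSeries k) ≠ 0 := by
          have hval : ((f • tp k H _ heH : ssr k H) : PowerSeries k)
              = (f : PowerSeries k) * PowerSeries.X ^ ((a - 1) * a + j) := rfl
          rw [hval, PowerSeries.coeff_mul_X_pow]
          exact hm
        obtain ⟨g, hg, h, hh, heq⟩ := hfQ _ hco
        rcases hg with rfl
        exact ⟨h, (hcar h).1 hh, by rw [← hsval']; exact heq⟩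
      rcases colon_char ha hℓ1 hℓa ((hcar m).1 hmH) hsub with hmeq | hq
      · exact ⟨s, Or.inl rfl, 0, H.zero_mem, by rw [hsval']; omega⟩
      · obtain ⟨J, hJ, h, hPh, hdec⟩ := decomp_helper ha0 ((hcar m).1 hmH) hq
        exact ⟨(ℓ + 1) * a + J, Or.inr ⟨J, hJ, rfl⟩, h, (hcar h).2 hPh, by omega⟩
    · rw [hI, MI, Ideal.span_le]
      rintro x ⟨g, hg, hx⟩
      rw [SetLike.mem_coe, Submodule.mem_colon]
      intro p hp
      rw [smul_eq_mul]
      rcases hg with rfl | ⟨j, hj, rfl⟩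
      · have hxQ : x ∈ Q := by
          rw [hQ]
          exact Ideal.subset_span (Subtype.ext hx)
        exact Ideal.mul_mem_right _ _ hxQ
      · have hgH : (ℓ + 1) * a + j ∈ H := hSumNH (ℓ + 1) _ ⟨j, hj, rfl⟩
        have hxg : x = tp k H ((ℓ + 1) * a + j) hgH := Subtype.ext hx
        rw [hpow𝔪] at hp
        rw [mul_comm]
        have hmul : p * x ∈ MI k H (SumN a (a - 1) + {(ℓ + 1) * a + j}) := by
          rw [← MI_mul_MI (hSumNH (a - 1)) (by rintro g rfl; exact hgH)]
          exact Ideal.mul_mem_mul hp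
            (by rw [hxg]; exact tp_mem_MI (Set.mem_singleton _) hgH)
        have hle : MI k H (SumN a (a - 1) + {(ℓ + 1) * a + j}) ≤ Q := by
          rw [hQMI]
          apply MI_le_MI hsingleH
          rintro y hy
          obtain ⟨u, ⟨j', hj', rfl⟩, v, rfl, rfl⟩ := Set.mem_add.1 hy
          have id5 : (a - 1) * a + a = a * a := by
            have h2 : a - 1 + 1 = a := by omega
            calc (a - 1) * a + a = (a - 1 + 1) * a := by ring
            _ = a * a := by rw [h2]
          have id9 : (ℓ + 1) * a = ℓ * a + a := by ring
          have id10 : (ℓ + 2) * a = ℓ * a + 2 * a := by ring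
          have hb : (ℓ + 2) * a ≤ a * a := Nat.mul_le_mul_right a hℓa
          have hℓℓa : ℓ ≤ ℓ * a := Nat.le_mul_of_pos_right ℓ ha0
          obtain ⟨h, hh⟩ : ∃ h, ((a - 1) * a + j') + ((ℓ + 1) * a + j)
              = (ℓ * a + ℓ) + h :=
            ⟨((a - 1) * a + j') + ((ℓ + 1) * a + j) - (ℓ * a + ℓ), by omega⟩
          refine ⟨s, rfl, h, ?_, by rw [hsval']; exact hh⟩
          exact hcnd' h (by omega)
        exact hle hmul
  have hQleI : Q ≤ I := by
    rw [hQMI, hIMI]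
    exact MI_le_MI hGnH (fun g hg => ⟨s, Or.inl rfl, 0, H.zero_mem, by
      rcases hg with rfl; omega⟩)
  have hpowI : ∀ n : ℕ, I ^ n = MI k H (Sg a ℓ s n) := by
    intro n
    induction n with
    | zero =>
      rw [pow_zero, Sg_zero, MI_top]
      exact Ideal.one_eq_top
    | succ n ih =>
      rw [pow_succ, ih, hIMI, MI_mul_MI (hSgH n) hGnH, Sg_succ]
  have hQIn : ∀ n : ℕ, Q * I ^ n = MI k H (({s} : Set ℕ) + Sg a ℓ s n) := by
    intro n
    rw [hQMI, hpowI, MI_mul_MI hsingleH (hSgH n)]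
  have hQIle : ∀ n : ℕ, Q * I ^ n ≤ I ^ (n + 1) := by
    intro n
    calc Q * I ^ n ≤ I * I ^ n := Ideal.mul_mono_left hQleI
    _ = I ^ (n + 1) := (pow_succ' I n).symm
  have hdiv : ∀ n : ℕ, (a - 1 + ℓ) / (ℓ + 1) ≤ n ↔ a ≤ n * (ℓ + 1) + 1 := by
    intro n
    rw [Nat.div_le_iff_le_mul_add_pred (by omega : 0 < ℓ + 1)]
    have h1 : (ℓ + 1) * n = n * (ℓ + 1) := by ring
    omega
  have main : ∀ n : ℕ, I ^ (n + 1) = Q * I ^ n ↔ (a - 1 + ℓ) / (ℓ + 1) ≤ n := by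
    intro n
    rw [hdiv n]
    constructor
    · intro heq
      by_contra hlt
      push_neg at hlt
      have hlt' : n * (ℓ + 1) + 2 ≤ a := by omega
      have hJb : ℓ - 1 ≤ (n + 1) * (ℓ + 1) := by
        have h1 : (n + 1) * (ℓ + 1) = n * (ℓ + 1) + ℓ + 1 := by ring
        omega
      have hmSg : (n + 1) * ((ℓ + 1) * a) + (ℓ - 1) ∈ Sg a ℓ s (n + 1) :=
        ⟨0, n + 1, ℓ - 1, by omega, hJb, by omega⟩
      have hmH : (n + 1) * ((ℓ + 1) * a) + (ℓ - 1) ∈ H := hSgH _ _ hmSg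
      have h1 : tp k H _ hmH ∈ I ^ (n + 1) := by
        rw [hpowI]; exact tp_mem_MI hmSg hmH
      rw [heq, hQIn n, mem_MI_iff (hQSgH n) (a * a) hcnd] at h1
      obtain ⟨g, hg, h, hh, hmeq⟩ := h1 _ (by
        rw [coe_tp, PowerSeries.coeff_X_pow, if_pos rfl]
        exact one_ne_zero)
      obtain ⟨y, hy, z, ⟨c, d, J, hcd, hJ, rfl⟩, rfl⟩ := Set.mem_add.1 hg
      rcases hy with rfl
      refine witness_lemma (a := a) (ℓ := ℓ) (c := c) (d := d) (J := J) (h := h)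
        ha hℓ1 (by rw [hcd]; omega) hJ ?_ ((hcar h).1 hh)
      have e1 : (c + d + 1) * (ℓ + 1) * a = (c + d + 1) * ((ℓ + 1) * a) := by ring
      rw [e1, hcd]
      rw [hsval'] at hmeq
      omega
    · intro hra
      apply le_antisymm
      · rw [hpowI (n + 1), hQIn n]
        apply MI_le_MI (hQSgH n)
        rintro g ⟨c, d, J, hcd, hJ, rfl⟩
        rcases Nat.eq_zero_or_pos c with rfl | hc
        · have hd : d = n + 1 := by omega
          subst hd
          obtain ⟨J', hJ', h, hPh, heq⟩ := easy_lemma ha hℓa hra hJ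
          refine ⟨s + (0 * s + n * ((ℓ + 1) * a) + J'),
            Set.mem_add.2 ⟨s, rfl, _, ⟨0, n, J', by omega, hJ', rfl⟩, rfl⟩,
            h, (hcar h).2 hPh, ?_⟩
          rw [hsval']
          omega
        · obtain ⟨c', rfl⟩ : ∃ c', c = c' + 1 := ⟨c - 1, by omega⟩
          refine ⟨s + (c' * s + d * ((ℓ + 1) * a) + J),
            Set.mem_add.2 ⟨s, rfl, _, ⟨c', d, J, by omega, hJ, rfl⟩, rfl⟩,
            0, H.zero_mem, ?_⟩
          have id1 : (c' + 1) * s = s + c' * s := by ring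
          omega
      · exact hQIle n
  refine ⟨main, ?_, ?_⟩
  · have hset : {n : ℕ | I ^ (n + 1) = Q * I ^ n} = Set.Ici ((a - 1 + ℓ) / (ℓ + 1)) := by
      ext n
      simp only [Set.mem_setOf_eq, Set.mem_Ici]
      exact main n
    rw [hset, csInf_Ici]
  · intro n
    apply le_antisymm
    · intro x hx
      rw [Submodule.mem_inf] at hx
      obtain ⟨hxQ, hxI⟩ := hx
      rw [hQMI, mem_MI_iff hsingleH (a * a) hcnd] at hxQ
      rw [hpowI (n + 1), mem_MI_iff (hSgH (n + 1)) (a * a) hcnd] at hxI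
      rw [hQIn n, mem_MI_iff (hQSgH n) (a * a) hcnd]
      intro m hm
      obtain ⟨g0, hg0, h₀, hh₀, heq0⟩ := hxQ m hm
      rw [show g0 = s from hg0] at heq0
      obtain ⟨g1, ⟨c, d, J, hcd, hJ, rfl⟩, h, hh, heq1⟩ := hxI m hm
      rw [hsval'] at heq0 heq1
      obtain ⟨c', d', J', hc'd', hJ', h', hPh', heqf⟩ :=
        inter_lemma (n := n) ha0 (by omega) heq0 ((hcar h₀).1 hh₀) hcd hJ heq1
          ((hcar h).1 hh)
      refine ⟨s + (c' * s + d' * ((ℓ + 1) * a) + J'),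
        Set.mem_add.2 ⟨s, rfl, _, ⟨c', d', J', hc'd', hJ', rfl⟩, rfl⟩,
        h', (hcar h').2 hPh', ?_⟩
      rw [hsval']
      omega
    · exact le_inf Ideal.mul_le_left (hQIle n)
end
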